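/- arXiv:0805.4578 — 5 statements merged into one kernel-verified Lean document; each statement's English description precedes it below -/
import Mathlib

section
/- If P₁ and P₂ are two complete cd-structures on a category C, then the union P₁ ∪ P₂ is a complete cd-structure on C. -/
open CategoryTheory CategoryTheory.Limits Opposite

universe v u
variable {C : Type u} [Category.{v} C]

/-- A commutative square in `C`, with corners `B`, `Y`, `A`, `X`. -/
structure CDSquare (C : Type u) [Category.{v} C] where
  B : C
  Y : C
  A : C
  X : C
  top : B ⟶ Y
  left : B ⟶ A
  p : Y ⟶ X
  e : A ⟶ X
  comm : top ≫ p = left ≫ e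

/-- A morphism of squares. -/
structure CDSquareHom (Q' Q : CDSquare C) where
  hB : Q'.B ⟶ Q.B
  hY : Q'.Y ⟶ Q.Y
  hA : Q'.A ⟶ Q.A
  hX : Q'.X ⟶ Q.X
  commTop : Q'.top ≫ hY = hB ≫ Q.top
  commLeft : Q'.left ≫ hA = hB ≫ Q.left
  commP : Q'.p ≫ hX = hY ≫ Q.p
  commE : Q'.e ≫ hX = hA ≫ Q.e

/-- Two squares are isomorphic if there is a morphism of squares which is an isomorphism
on each corner. -/
def CDSquare.Iso (Q' Q : CDSquare C) : Prop :=
  ∃ φ : CDSquareHom Q' Q, IsIso φ.hB ∧ IsIso φ.hY ∧ IsIso φ.hA ∧ IsIso φ.hX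

/-- A cd-structure is a collection of commutative squares closed under isomorphism. -/
def IsCdStructure (P : Set (CDSquare C)) : Prop :=
  ∀ Q ∈ P, ∀ Q' : CDSquare C, CDSquare.Iso Q' Q → Q' ∈ P

/-- The sieve generated by the two morphisms `p : Y ⟶ X` and `e : A ⟶ X` of a square. -/
def CDSquare.sieve (Q : CDSquare C) : Sieve Q.X where
  arrows Z g := (∃ h : Z ⟶ Q.Y, g = h ≫ Q.p) ∨ (∃ h : Z ⟶ Q.A, g = h ≫ Q.e)
  downward_closed := by
    rintro Z W g (⟨h, rfl⟩ | ⟨h, rfl⟩) f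
    · exact Or.inl ⟨f ≫ h, (Category.assoc _ _ _).symm⟩
    · exact Or.inr ⟨f ≫ h, (Category.assoc _ _ _).symm⟩

variable [HasInitial C]

/-- The topology associated with a cd-structure: the smallest Grothendieck topology
for which the empty sieve covers the initial object and the sieve generated by the two
sides of any distinguished square is a covering sieve. -/
def cdTopology (P : Set (CDSquare C)) : GrothendieckTopology C :=
  sInf {J | (⊥ : Sieve (⊥_ C)) ∈ J (⊥_ C) ∧ ∀ Q ∈ P, Q.sieve ∈ J Q.X}

/-- Simple coverings: the smallest class of families of morphisms containing the
isomorphisms and closed under composition with distinguished squares. -/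
inductive IsSimpleCovering (P : Set (CDSquare C)) : ∀ {X : C}, Presieve X → Prop
  | of_iso {X Y : C} (f : Y ⟶ X) (hf : IsIso f) : IsSimpleCovering P (Presieve.singleton f)
  | of_square (Q : CDSquare C) (hQ : Q ∈ P) (Sy : Presieve Q.Y) (Sa : Presieve Q.A)
      (hy : IsSimpleCovering P Sy) (ha : IsSimpleCovering P Sa) :
      IsSimpleCovering P (fun Z g =>
        (∃ (h : Z ⟶ Q.Y), Sy h ∧ g = h ≫ Q.p) ∨ (∃ (h : Z ⟶ Q.A), Sa h ∧ g = h ≫ Q.e))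

/-- A cd-structure is complete if any covering sieve of an object not isomorphic to the
initial object contains a sieve generated by a simple covering. -/
def IsCompleteCd (P : Set (CDSquare C)) : Prop :=
  ∀ (X : C) (S : Sieve X), ¬ Nonempty (X ≅ ⊥_ C) → S ∈ cdTopology P X →
    ∃ T : Presieve X, IsSimpleCovering P T ∧ Sieve.generate T ≤ S

set_option linter.unusedSectionVars false
section Aux

variable {P P' P₁ P₂ : Set (CDSquare C)}

lemma simple_nonempty {X : C} {T : Presieve X} (hT : IsSimpleCovering P T) :
    ∃ (Z : C) (g : Z ⟶ X), T g := by
  induction hT with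
  | of_iso f hf => exact ⟨_, f, Presieve.singleton.mk⟩
  | of_square Q hQ Sy Sa hy ha ihy iha =>
    obtain ⟨Z, g, hg⟩ := ihy
    exact ⟨Z, g ≫ Q.p, Or.inl ⟨g, hg, rfl⟩⟩

lemma simple_mono (hPP : P ⊆ P') {X : C} {T : Presieve X}
    (hT : IsSimpleCovering P T) : IsSimpleCovering P' T := by
  induction hT with
  | of_iso f hf => exact .of_iso f hf
  | of_square Q hQ Sy Sa hy ha ihy iha => exact .of_square Q (hPP hQ) Sy Sa ihy iha

lemma cd_union (hP₁ : IsCdStructure P₁) (hP₂ : IsCdStructure P₂) :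
    IsCdStructure (P₁ ∪ P₂) := by
  rintro Q (h | h) Q' hiso
  · exact Or.inl (hP₁ Q h Q' hiso)
  · exact Or.inr (hP₂ Q h Q' hiso)

lemma bot_mem_cd : (⊥ : Sieve (⊥_ C)) ∈ cdTopology P (⊥_ C) :=
  (GrothendieckTopology.mem_sInf _ _).2 fun _ hJ => hJ.1

lemma square_mem_cd {Q : CDSquare C} (hQ : Q ∈ P) : Q.sieve ∈ cdTopology P Q.X :=
  (GrothendieckTopology.mem_sInf _ _).2 fun _ hJ => hJ.2 Q hQ

lemma sieve_pullback_bot {X Y : C} (f : Y ⟶ X) :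
    (⊥ : Sieve X).pullback f = (⊥ : Sieve Y) :=
  Sieve.ext fun _ _ => Iff.rfl

lemma to_initial_iso (hc : IsCompleteCd P) {W Z : C} (f : W ⟶ Z)
    (hZ : Nonempty (Z ≅ ⊥_ C)) : Nonempty (W ≅ ⊥_ C) := by
  by_contra hW
  obtain ⟨e⟩ := hZ
  have hb : (⊥ : Sieve W) ∈ cdTopology P W := by
    have := (cdTopology P).pullback_stable (f ≫ e.hom) (bot_mem_cd (P := P))
    rwa [sieve_pullback_bot] at this
  obtain ⟨T, hT, hle⟩ := hc W ⊥ hW hb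
  obtain ⟨V, g, hg⟩ := simple_nonempty hT
  exact hle _ ⟨V, 𝟙 V, g, hg, Category.id_comp g⟩

lemma bot_mem_cd_initial {Z : C} (hZ : Nonempty (Z ≅ ⊥_ C)) :
    (⊥ : Sieve Z) ∈ cdTopology P Z := by
  obtain ⟨e⟩ := hZ
  have := (cdTopology P).pullback_stable e.hom (bot_mem_cd (P := P))
  rwa [sieve_pullback_bot] at this

lemma mem_generate_of_initial {X : C} {T : Presieve X} (hT : IsSimpleCovering P T) :
    ∀ {Z : C}, Nonempty (Z ≅ ⊥_ C) → ∀ (h : Z ⟶ X), Sieve.generate T h := by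
  induction hT with
  | of_iso f hf =>
    intro Z hZ h
    haveI := hf
    exact ⟨_, h ≫ inv f, f, Presieve.singleton.mk, by simp⟩
  | of_square Q hQ Sy Sa hy ha ihy iha =>
    intro Z hZ h
    obtain ⟨e⟩ := hZ
    have hI : IsInitial Z := initialIsInitial.ofIso e.symm
    obtain ⟨W, l, s, hs, hls⟩ := ihy ⟨e⟩ (e.hom ≫ initial.to Q.Y)
    refine ⟨W, l, s ≫ Q.p, Or.inl ⟨s, hs, rfl⟩, ?_⟩
    rw [← Category.assoc, hls]
    exact hI.hom_ext _ _

end Aux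
lemma simple_push (hP : IsCdStructure P) {X X' : C} {T : Presieve X}
    (hT : IsSimpleCovering P T) (σ : X ⟶ X') (hσ : IsIso σ) :
    IsSimpleCovering P (fun Z (g : Z ⟶ X') => ∃ h : Z ⟶ X, T h ∧ g = h ≫ σ) := by
  haveI := hσ
  cases hT with
  | of_iso f hf =>
    have he : (fun Z (g : Z ⟶ X') => ∃ h, Presieve.singleton f h ∧ g = h ≫ σ)
        = Presieve.singleton (f ≫ σ) := by
      funext Z g
      apply propext
      constructor
      · rintro ⟨h, hs, rfl⟩
        cases hs
        exact Presieve.singleton.mk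
      · rintro ⟨⟩
        exact ⟨f, Presieve.singleton.mk, rfl⟩
    rw [he]
    exact .of_iso _ inferInstance
  | of_square Q hQ Sy Sa hy ha =>
    have hc : Q.top ≫ Q.p ≫ σ = Q.left ≫ Q.e ≫ σ := by
      rw [← Category.assoc, Q.comm, Category.assoc]
    let Q' : CDSquare C := ⟨Q.B, Q.Y, Q.A, X', Q.top, Q.left, Q.p ≫ σ, Q.e ≫ σ, hc⟩
    have hQ' : Q' ∈ P := by
      refine hP Q hQ Q' ⟨⟨𝟙 _, 𝟙 _, 𝟙 _, inv σ, by simp; rfl, by simp; rfl, ?_, ?_⟩,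
        inferInstance, inferInstance, inferInstance, inferInstance⟩
      · show (Q.p ≫ σ) ≫ inv σ = 𝟙 _ ≫ Q.p
        simp
      · show (Q.e ≫ σ) ≫ inv σ = 𝟙 _ ≫ Q.e
        simp
    have hs := IsSimpleCovering.of_square (P := P) Q' hQ' Sy Sa hy ha
    show IsSimpleCovering P (fun Z (g : Z ⟶ X') => ∃ h : Z ⟶ Q.X,
      ((∃ h', Sy h' ∧ h = h' ≫ Q.p) ∨ (∃ h', Sa h' ∧ h = h' ≫ Q.e)) ∧ g = h ≫ σ)
    have he : (fun Z (g : Z ⟶ X') => ∃ h : Z ⟶ Q.X,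
        ((∃ h', Sy h' ∧ h = h' ≫ Q.p) ∨ (∃ h', Sa h' ∧ h = h' ≫ Q.e)) ∧ g = h ≫ σ)
        = (fun Z (g : Z ⟶ Q'.X) =>
          (∃ h, Sy h ∧ g = h ≫ Q'.p) ∨ (∃ h, Sa h ∧ g = h ≫ Q'.e)) := by
      funext Z g
      apply propext
      constructor
      · rintro ⟨h, (⟨k, hk, rfl⟩ | ⟨k, hk, rfl⟩), rfl⟩
        · exact Or.inl ⟨k, hk, (Category.assoc _ _ _)⟩
        · exact Or.inr ⟨k, hk, (Category.assoc _ _ _)⟩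
      · rintro (⟨k, hk, rfl⟩ | ⟨k, hk, rfl⟩)
        · exact ⟨k ≫ Q.p, Or.inl ⟨k, hk, rfl⟩, (Category.assoc _ _ _).symm⟩
        · exact ⟨k ≫ Q.e, Or.inr ⟨k, hk, rfl⟩, (Category.assoc _ _ _).symm⟩
    rw [he]
    exact hs

lemma simple_compose (hP : IsCdStructure P) {Y : C} {T₀ : Presieve Y}
    (hT₀ : IsSimpleCovering P T₀) :
    ∀ R : Sieve Y, (∀ {Z : C} (g : Z ⟶ Y), T₀ g →
      ∃ Tg : Presieve Z, IsSimpleCovering P Tg ∧ Sieve.generate Tg ≤ R.pullback g) →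
    ∃ T' : Presieve Y, IsSimpleCovering P T' ∧ Sieve.generate T' ≤ R := by
  induction hT₀ with
  | of_iso f hf =>
    intro R hR
    obtain ⟨Tf, hTf, hle⟩ := hR f Presieve.singleton.mk
    refine ⟨_, simple_push hP hTf f hf, ?_⟩
    rw [Sieve.generate_le_iff]
    rintro Z g ⟨h, hh, rfl⟩
    exact hle _ (Sieve.le_generate Tf _ _ hh)
  | of_square Q hQ Sy Sa hy ha ihy iha =>
    intro R hR
    obtain ⟨Ty, hTy, hley⟩ := ihy (R.pullback Q.p) (fun {Z} h hh => by
      obtain ⟨Tg, hTg, hle⟩ := hR (h ≫ Q.p) (Or.inl ⟨h, hh, rfl⟩)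
      rw [Sieve.pullback_comp] at hle
      exact ⟨Tg, hTg, hle⟩)
    obtain ⟨Ta, hTa, hlea⟩ := iha (R.pullback Q.e) (fun {Z} h hh => by
      obtain ⟨Tg, hTg, hle⟩ := hR (h ≫ Q.e) (Or.inr ⟨h, hh, rfl⟩)
      rw [Sieve.pullback_comp] at hle
      exact ⟨Tg, hTg, hle⟩)
    refine ⟨_, .of_square Q hQ Ty Ta hTy hTa, ?_⟩
    rw [Sieve.generate_le_iff]
    rintro Z g (⟨h, hh, rfl⟩ | ⟨h, hh, rfl⟩)
    · exact hley _ (Sieve.le_generate Ty _ _ hh)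
    · exact hlea _ (Sieve.le_generate Ta _ _ hh)
lemma simple_pullback (hP₁ : IsCdStructure P₁) (hP₂ : IsCdStructure P₂)
    (h₁ : IsCompleteCd P₁) (h₂ : IsCompleteCd P₂) {X : C} {T : Presieve X}
    (hT : IsSimpleCovering (P₁ ∪ P₂) T) :
    ∀ {Y : C} (f : Y ⟶ X), ∃ T' : Presieve Y, IsSimpleCovering (P₁ ∪ P₂) T' ∧
      Sieve.generate T' ≤ (Sieve.generate T).pullback f := by
  have hP : IsCdStructure (P₁ ∪ P₂) := cd_union hP₁ hP₂
  induction hT with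
  | of_iso f₀ hf₀ =>
    intro Y f
    haveI := hf₀
    refine ⟨Presieve.singleton (𝟙 Y), .of_iso _ inferInstance, ?_⟩
    rw [Sieve.generate_le_iff]
    rintro Z g ⟨⟩
    show (Sieve.generate _).arrows (𝟙 _ ≫ f)
    rw [Category.id_comp]
    exact ⟨_, f ≫ inv f₀, f₀, Presieve.singleton.mk, by simp⟩
  | of_square Q hQ Sy Sa hy ha ihy iha =>
    intro Y f
    by_cases hY : Nonempty (Y ≅ ⊥_ C)
    · refine ⟨Presieve.singleton (𝟙 Y), .of_iso _ inferInstance, ?_⟩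
      rw [Sieve.generate_le_iff]
      rintro Z g ⟨⟩
      show (Sieve.generate _).arrows (𝟙 _ ≫ f)
      rw [Category.id_comp]
      exact mem_generate_of_initial (.of_square Q hQ Sy Sa hy ha) hY f
    · have main : ∀ P : Set (CDSquare C), Q ∈ P → IsCompleteCd P → P ⊆ P₁ ∪ P₂ →
          ∃ T' : Presieve Y, IsSimpleCovering (P₁ ∪ P₂) T' ∧
            Sieve.generate T' ≤ (Sieve.generate (fun Z g =>
              (∃ h : Z ⟶ Q.Y, Sy h ∧ g = h ≫ Q.p) ∨
              (∃ h : Z ⟶ Q.A, Sa h ∧ g = h ≫ Q.e))).pullback f := by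
        intro P hQP hc hsub
        obtain ⟨T₀, hT₀, hle₀⟩ := hc Y (Q.sieve.pullback f) hY
          ((cdTopology P).pullback_stable f (square_mem_cd hQP))
        refine simple_compose hP (simple_mono hsub hT₀) _ ?_
        intro Z g hg
        have hgf : Q.sieve.arrows (g ≫ f) :=
          hle₀ _ ⟨Z, 𝟙 Z, g, hg, Category.id_comp g⟩
        have hsy : Sieve.generate Sy ≤ (Sieve.generate (fun Z g =>
            (∃ h : Z ⟶ Q.Y, Sy h ∧ g = h ≫ Q.p) ∨
            (∃ h : Z ⟶ Q.A, Sa h ∧ g = h ≫ Q.e))).pullback Q.p := by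
          rw [Sieve.generate_le_iff]
          intro W s hs
          exact ⟨W, 𝟙 W, s ≫ Q.p, Or.inl ⟨s, hs, rfl⟩, by simp⟩
        have hsa : Sieve.generate Sa ≤ (Sieve.generate (fun Z g =>
            (∃ h : Z ⟶ Q.Y, Sy h ∧ g = h ≫ Q.p) ∨
            (∃ h : Z ⟶ Q.A, Sa h ∧ g = h ≫ Q.e))).pullback Q.e := by
          rw [Sieve.generate_le_iff]
          intro W s hs
          exact ⟨W, 𝟙 W, s ≫ Q.e, Or.inr ⟨s, hs, rfl⟩, by simp⟩
        rcases hgf with ⟨h, hh⟩ | ⟨h, hh⟩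
        · obtain ⟨Tg, hTg, hle⟩ := ihy h
          refine ⟨Tg, hTg, hle.trans ?_⟩
          have := Sieve.pullback_monotone h hsy
          rw [← Sieve.pullback_comp, ← hh, Sieve.pullback_comp] at this
          exact this
        · obtain ⟨Tg, hTg, hle⟩ := iha h
          refine ⟨Tg, hTg, hle.trans ?_⟩
          have := Sieve.pullback_monotone h hsa
          rw [← Sieve.pullback_comp, ← hh, Sieve.pullback_comp] at this
          exact this
      rcases hQ with hq | hq
      · exact main P₁ hq h₁ Set.subset_union_left
      · exact main P₂ hq h₂ Set.subset_union_right

lemma simple_exists_nonbot (h₁ : IsCompleteCd P₁) (h₂ : IsCompleteCd P₂)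
    {X : C} {T : Presieve X} (hT : IsSimpleCovering (P₁ ∪ P₂) T) :
    ¬ Nonempty (X ≅ ⊥_ C) → ∃ (Z : C) (g : Z ⟶ X), T g ∧ ¬ Nonempty (Z ≅ ⊥_ C) := by
  induction hT with
  | of_iso f hf =>
    intro hX
    haveI := hf
    exact ⟨_, f, Presieve.singleton.mk, fun ⟨e⟩ => hX ⟨(asIso f).symm ≪≫ e⟩⟩
  | of_square Q hQ Sy Sa hy ha ihy iha =>
    intro hX
    by_cases hYb : Nonempty (Q.Y ≅ ⊥_ C)
    · by_cases hAb : Nonempty (Q.A ≅ ⊥_ C)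
      · exfalso
        have hdom : ∀ {Z : C} (g : Z ⟶ Q.X), Q.sieve.arrows g → Nonempty (Z ≅ ⊥_ C) := by
          rintro Z g (⟨h, rfl⟩ | ⟨h, rfl⟩)
          · exact to_initial_iso h₁ h hYb
          · exact to_initial_iso h₁ h hAb
        have contra : ∀ P : Set (CDSquare C), Q ∈ P → IsCompleteCd P → False := by
          intro P hQP hc
          have hbot : (⊥ : Sieve Q.X) ∈ cdTopology P Q.X := by
            refine (cdTopology P).transitive (square_mem_cd hQP) _ ?_
            intro Z g hg
            rw [sieve_pullback_bot]
            exact bot_mem_cd_initial (hdom g hg)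
          obtain ⟨T', hT', hle⟩ := hc _ _ hX hbot
          obtain ⟨Z, g, hg⟩ := simple_nonempty hT'
          exact hle _ ⟨Z, 𝟙 Z, g, hg, Category.id_comp g⟩
        rcases hQ with hq | hq
        · exact contra P₁ hq h₁
        · exact contra P₂ hq h₂
      · obtain ⟨Z, g, hg, hZ⟩ := iha hAb
        exact ⟨Z, g ≫ Q.e, Or.inr ⟨g, hg, rfl⟩, hZ⟩
    · obtain ⟨Z, g, hg, hZ⟩ := ihy hYb
      exact ⟨Z, g ≫ Q.p, Or.inl ⟨g, hg, rfl⟩, hZ⟩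

theorem statement2 (P₁ P₂ : Set (CDSquare C)) (hP₁ : IsCdStructure P₁) (hP₂ : IsCdStructure P₂)
    (h₁ : IsCompleteCd P₁) (h₂ : IsCompleteCd P₂) :
    IsCdStructure (P₁ ∪ P₂) ∧ IsCompleteCd (P₁ ∪ P₂) := by
  have hP : IsCdStructure (P₁ ∪ P₂) := cd_union hP₁ hP₂
  refine ⟨hP, ?_⟩
  let J' : GrothendieckTopology C :=
    { sieves := fun X => {S | Nonempty (X ≅ ⊥_ C) ∨
        ∃ T : Presieve X, IsSimpleCovering (P₁ ∪ P₂) T ∧ Sieve.generate T ≤ S}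
      top_mem' := fun X => Or.inr ⟨Presieve.singleton (𝟙 X), .of_iso _ inferInstance, le_top⟩
      pullback_stable' := by
        intro X Y S f hS
        rcases hS with hX | ⟨T, hT, hle⟩
        · exact Or.inl (to_initial_iso h₁ f hX)
        · obtain ⟨T', hT', hle'⟩ := simple_pullback hP₁ hP₂ h₁ h₂ hT f
          exact Or.inr ⟨T', hT', hle'.trans (Sieve.pullback_monotone f hle)⟩
      transitive' := by
        intro X S hS R hR
        by_cases hX : Nonempty (X ≅ ⊥_ C)
        · exact Or.inl hX
        rcases hS with hX' | ⟨T, hT, hle⟩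
        · exact absurd hX' hX
        obtain ⟨Z₀, g₀, hg₀, hZ₀⟩ := simple_exists_nonbot h₁ h₂ hT hX
        have hg₀S : S.arrows g₀ := hle _ ⟨Z₀, 𝟙 Z₀, g₀, hg₀, Category.id_comp g₀⟩
        rcases hR hg₀S with h0 | ⟨T₀, hT₀, hle₀⟩
        · exact absurd h0 hZ₀
        have hIS : ∀ {V : C} (w : V ⟶ X), Nonempty (V ≅ ⊥_ C) → R.arrows w := by
          intro V w hV
          obtain ⟨e⟩ := hV
          have hinit : R.arrows (initial.to Z₀ ≫ g₀) :=
            hle₀ _ (mem_generate_of_initial hT₀ ⟨Iso.refl _⟩ (initial.to Z₀))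
          have hVI : IsInitial V := initialIsInitial.ofIso e.symm
          have hw : w = e.hom ≫ initial.to Z₀ ≫ g₀ := hVI.hom_ext _ _
          rw [hw]
          exact R.downward_closed hinit e.hom
        refine Or.inr (simple_compose hP hT R ?_)
        intro Z g hg
        by_cases hZ : Nonempty (Z ≅ ⊥_ C)
        · refine ⟨Presieve.singleton (𝟙 Z), .of_iso _ inferInstance, ?_⟩
          rw [Sieve.generate_le_iff]
          rintro V k ⟨⟩
          show R.arrows (𝟙 _ ≫ g)
          rw [Category.id_comp]
          exact hIS g hZ
        · have hgS : S.arrows g := hle _ ⟨Z, 𝟙 Z, g, hg, Category.id_comp g⟩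
          rcases hR hgS with h0 | hgood
          · exact absurd h0 hZ
          · exact hgood }
  have hJ'mem : J' ∈ {J : GrothendieckTopology C | (⊥ : Sieve (⊥_ C)) ∈ J (⊥_ C) ∧
      ∀ Q ∈ P₁ ∪ P₂, Q.sieve ∈ J Q.X} := by
    constructor
    · exact Or.inl ⟨Iso.refl _⟩
    · intro Q hQ
      by_cases hQX : Nonempty (Q.X ≅ ⊥_ C)
      · exact Or.inl hQX
      · refine Or.inr ⟨_, .of_square Q hQ (Presieve.singleton (𝟙 Q.Y))
          (Presieve.singleton (𝟙 Q.A)) (.of_iso _ inferInstance) (.of_iso _ inferInstance), ?_⟩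
        rw [Sieve.generate_le_iff]
        rintro Z g (⟨h, hh, rfl⟩ | ⟨h, hh, rfl⟩)
        · exact Or.inl ⟨h, rfl⟩
        · exact Or.inr ⟨h, rfl⟩
  have hle : cdTopology (P₁ ∪ P₂) ≤ J' := sInf_le hJ'mem
  intro X S hX hS
  have hmem : S ∈ J' X := GrothendieckTopology.le_def.mp hle X hS
  rcases hmem with h0 | hgood
  · exact absurd h0 hX
  · exact hgood
end

section
/- Let P be a complete cd-structure on C, and let U be an object of C. Then the cd-structure P/U on the slice category C/U induced by P (consisting of squares in C/U whose underlying squares in C are in P) is complete. -/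
open CategoryTheory CategoryTheory.Limits Opposite

universe v u
variable {C : Type u} [Category.{v} C]

variable [HasInitial C]

/-- Image of a commutative square under a functor. -/
@[simps]
def CDSquare.map {D : Type*} [Category D] (F : C ⥤ D) (Q : CDSquare C) : CDSquare D where
  B := F.obj Q.B
  Y := F.obj Q.Y
  A := F.obj Q.A
  X := F.obj Q.X
  top := F.map Q.top
  left := F.map Q.left
  p := F.map Q.p
  e := F.map Q.e
  comm := by rw [← F.map_comp, ← F.map_comp, Q.comm]

/-- The cd-structure induced on the slice category `C/U`: the squares whose underlying
squares in `C` are distinguished. -/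
def sliceCd (P : Set (CDSquare C)) (U : C) : Set (CDSquare (Over U)) :=
  {Q | Q.map (Over.forget U) ∈ P}


section Aux

variable (P : Set (CDSquare C)) (U : C)

lemma bot_mem_cdTopology [HasInitial C] {Z : C} (hZ : IsInitial Z) :
    (⊥ : Sieve Z) ∈ cdTopology P Z := by
  have h0 : (⊥ : Sieve (⊥_ C)) ∈ cdTopology P (⊥_ C) :=
    (GrothendieckTopology.mem_sInf _ _).2 fun t ht => ht.1
  have h1 := (cdTopology P).pullback_stable (hZ.uniqueUpToIso initialIsInitial).hom h0
  have h2 : Sieve.pullback (hZ.uniqueUpToIso initialIsInitial).hom (⊥ : Sieve (⊥_ C)) =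
      (⊥ : Sieve Z) := by
    ext W g
    exact Iff.rfl
  rwa [h2] at h1

lemma cdTopology_slice_le [HasInitial C] :
    cdTopology (sliceCd P U) ≤ (cdTopology P).over U := by
  apply sInf_le
  constructor
  · rw [GrothendieckTopology.mem_over_iff]
    have hb : Sieve.overEquiv (⊥_ (Over U)) (⊥ : Sieve (⊥_ (Over U))) = ⊥ :=
      Sieve.functorPushforward_bot _ _
    rw [hb]
    exact bot_mem_cdTopology P (initialIsInitial.isInitialObj (Over.forget U) _)
  · intro Q hQ
    rw [GrothendieckTopology.mem_over_iff]
    have hmem : (Q.map (Over.forget U)).sieve ∈ cdTopology P Q.X.left :=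
      (GrothendieckTopology.mem_sInf _ _).2 fun t ht => ht.2 _ hQ
    refine (cdTopology P).superset_covering ?_ hmem
    rintro Z g (⟨h, rfl⟩ | ⟨h, rfl⟩)
    · refine (Sieve.overEquiv_iff _ (h ≫ Q.p.left)).2 ?_
      refine Or.inl ⟨Over.homMk h (by dsimp; rw [← Over.w Q.p]; exact (Category.assoc _ _ _).symm), ?_⟩
      ext
      rfl
    · refine (Sieve.overEquiv_iff _ (h ≫ Q.e.left)).2 ?_
      refine Or.inr ⟨Over.homMk h (by dsimp; rw [← Over.w Q.e]; exact (Category.assoc _ _ _).symm), ?_⟩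
      ext
      rfl

lemma lift_simple {Z : C} {T : Presieve Z} (hT : IsSimpleCovering P T) :
    ∀ z : Z ⟶ U, ∃ T' : Presieve (Over.mk z),
      IsSimpleCovering (sliceCd P U) T' ∧
        ∀ ⦃W : Over U⦄ (g : W ⟶ Over.mk z), T' g → T g.left := by
  induction hT with
  | of_iso f hf =>
    intro z
    refine ⟨Presieve.singleton (Over.homMk f : Over.mk (f ≫ z) ⟶ Over.mk z), ?_, ?_⟩
    · apply IsSimpleCovering.of_iso
      have : IsIso ((Over.forget U).map (Over.homMk f : Over.mk (f ≫ z) ⟶ Over.mk z)) := hf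
      exact isIso_of_reflects_iso _ (Over.forget U)
    · rintro W g ⟨⟩
      exact Presieve.singleton.mk
  | of_square Q hQ Sy Sa hy ha ihy iha =>
    intro z
    obtain ⟨Sy', hSy', hy'⟩ := ihy (Q.p ≫ z)
    obtain ⟨Sa', hSa', ha'⟩ := iha (Q.e ≫ z)
    let Q' : CDSquare (Over U) :=
      { B := Over.mk (Q.top ≫ Q.p ≫ z)
        Y := Over.mk (Q.p ≫ z)
        A := Over.mk (Q.e ≫ z)
        X := Over.mk z
        top := Over.homMk Q.top
        left := Over.homMk Q.left (by
          dsimp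
          rw [← Category.assoc, ← Q.comm, Category.assoc])
        p := Over.homMk Q.p
        e := Over.homMk Q.e
        comm := by
          ext
          exact Q.comm }
    have hQ' : Q' ∈ sliceCd P U := hQ
    refine ⟨_, IsSimpleCovering.of_square Q' hQ' Sy' Sa' hSy' hSa', ?_⟩
    rintro W g (⟨h, hh, rfl⟩ | ⟨h, hh, rfl⟩)
    · exact Or.inl ⟨h.left, hy' h hh, rfl⟩
    · exact Or.inr ⟨h.left, ha' h hh, rfl⟩

end Aux

theorem statement3 (P : Set (CDSquare C)) (hP : IsCdStructure P)
    (hcomp : IsCompleteCd P) (U : C) :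
    IsCompleteCd (sliceCd P U) := by
  intro X S hX hS
  have hS' : Sieve.overEquiv X S ∈ cdTopology P X.left :=
    cdTopology_slice_le P U X hS
  have hX' : ¬ Nonempty (X.left ≅ ⊥_ C) := by
    rintro ⟨e⟩
    have hinit : IsInitial X.left := initialIsInitial.ofIso e.symm
    have hXinit : IsInitial X :=
      IsInitial.ofUniqueHom (fun W => Over.homMk (hinit.to W.left) (hinit.hom_ext _ _))
        (fun W m => by
          ext
          exact hinit.hom_ext _ _)
    exact hX ⟨hXinit.uniqueUpToIso initialIsInitial⟩
  obtain ⟨T, hT, hTS⟩ := hcomp X.left (Sieve.overEquiv X S) hX' hS'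
  obtain ⟨T', hT', hle⟩ := lift_simple P U hT X.hom
  refine ⟨T', hT', ?_⟩
  rw [Sieve.generate_le_iff]
  intro W g hg
  have h1 : T g.left := hle g hg
  have h2 : Sieve.overEquiv X S g.left := hTS _ (Sieve.le_generate T _ _ h1)
  have h3 := (Sieve.overEquiv_symm_iff (Y := X) (Sieve.overEquiv X S) g).2 h2
  convert h3 using 2
  exact ((Sieve.overEquiv X).symm_apply_apply S).symm
end

section
/- Let P be a complete cd-structure and F a presheaf of sets on C such that F(∅) is a one-point set and for every distinguished square Q in P (with corners B, Y, A, X) the square of sets F(X) → F(Y), F(X) → F(A), F(Y) → F(B), F(A) → F(B) is a pullback square. Then F is a sheaf in the topology t_P associated to P. -/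
open CategoryTheory CategoryTheory.Limits Opposite

universe w v u
variable {C : Type u} [Category.{v} C]

variable [HasInitial C]

namespace CdProofAux

variable {P : Set (CDSquare C)}

lemma simple_nonempty {X : C} {T : Presieve X} (hT : IsSimpleCovering P T) :
    ∃ (Z : C) (g : Z ⟶ X), T g := by
  induction hT with
  | of_iso f hf => exact ⟨_, f, Presieve.singleton.mk⟩
  | of_square Q hQ Sy Sa hy ha ihy iha =>
    obtain ⟨Z, h, hh⟩ := ihy
    exact ⟨Z, h ≫ Q.p, Or.inl ⟨h, hh, rfl⟩⟩

lemma square_mem_cdTopology {Q : CDSquare C} (hQ : Q ∈ P) : Q.sieve ∈ cdTopology P Q.X :=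
  (GrothendieckTopology.mem_sInf _ _).2 fun _ hJ => hJ.2 Q hQ

lemma bot_mem_cdTopology : (⊥ : Sieve (⊥_ C)) ∈ cdTopology P (⊥_ C) :=
  (GrothendieckTopology.mem_sInf _ _).2 fun _ hJ => hJ.1

lemma generate_simple_mem {X : C} {T : Presieve X} (hT : IsSimpleCovering P T) :
    Sieve.generate T ∈ cdTopology P X := by
  induction hT with
  | of_iso f hf =>
    haveI := hf
    rw [Sieve.generate_of_singleton_isSplitEpi]
    exact (cdTopology P).top_mem _
  | of_square Q hQ Sy Sa hy ha ihy iha =>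
    apply (cdTopology P).transitive (square_mem_cdTopology hQ)
    rintro Z g (⟨h, rfl⟩ | ⟨h, rfl⟩)
    · refine (cdTopology P).superset_covering ?_ ((cdTopology P).pullback_stable h ihy)
      rintro W k ⟨V, l, m, hm, hk⟩
      exact ⟨V, l, m ≫ Q.p, Or.inl ⟨m, hm, rfl⟩, by rw [← Category.assoc, hk, Category.assoc]⟩
    · refine (cdTopology P).superset_covering ?_ ((cdTopology P).pullback_stable h iha)
      rintro W k ⟨V, l, m, hm, hk⟩
      exact ⟨V, l, m ≫ Q.e, Or.inr ⟨m, hm, rfl⟩, by rw [← Category.assoc, hk, Category.assoc]⟩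

lemma nonempty_iso_bot (hcomp : IsCompleteCd P) {Z : C} (f : Z ⟶ ⊥_ C) :
    Nonempty (Z ≅ ⊥_ C) := by
  by_contra hZ
  have hbot : (⊥ : Sieve Z) ∈ cdTopology P Z := by
    have h := (cdTopology P).pullback_stable f (bot_mem_cdTopology (P := P))
    have he : (⊥ : Sieve (⊥_ C)).pullback f = ⊥ := by
      ext W g
      constructor
      · intro hg; exact hg.elim
      · intro hg; exact hg.elim
    rwa [he] at h
  obtain ⟨T, hT, hle⟩ := hcomp Z ⊥ hZ hbot
  obtain ⟨W, g, hg⟩ := simple_nonempty hT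
  exact (hle _ (Sieve.le_generate T _ _ hg)).elim

lemma type_pb_exists {W X Y Z : Type w} {fst : W ⟶ X} {snd : W ⟶ Y} {f : X ⟶ Z} {g : Y ⟶ Z}
    (h : IsPullback fst snd f g) {x : X} {y : Y} (hc : f x = g y) :
    ∃ w : W, fst w = x ∧ snd w = y := by
  have hw : TypeCat.ofHom (fun _ : PUnit.{w+1} => x) ≫ f = TypeCat.ofHom (fun _ : PUnit.{w+1} => y) ≫ g :=
    by ext; exact hc
  exact ⟨h.lift _ _ hw PUnit.unit, ConcreteCategory.congr_hom (h.lift_fst _ _ hw) PUnit.unit,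
    ConcreteCategory.congr_hom (h.lift_snd _ _ hw) PUnit.unit⟩

lemma type_pb_inj {W X Y Z : Type w} {fst : W ⟶ X} {snd : W ⟶ Y} {f : X ⟶ Z} {g : Y ⟶ Z}
    (h : IsPullback fst snd f g) {w₁ w₂ : W}
    (h1 : fst w₁ = fst w₂) (h2 : snd w₁ = snd w₂) : w₁ = w₂ := by
  have := h.hom_ext (k := TypeCat.ofHom fun _ : PUnit.{w+1} => w₁) (l := TypeCat.ofHom fun _ => w₂)
      (by ext; exact h1) (by ext; exact h2)
  exact ConcreteCategory.congr_hom this PUnit.unit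

lemma family_congr {F : Cᵒᵖ ⥤ Type w} {X : C} {S : Sieve X}
    (x : Presieve.FamilyOfElements F (S : Presieve X)) {Z : C} {g g' : Z ⟶ X}
    (h : g = g') (hg : S g) (hg' : S g') : x g hg = x g' hg' := by
  subst h; rfl

/-- `F` distinguishes elements of `F(X)` that agree on `R`. -/
def ExtFor (F : Cᵒᵖ ⥤ Type w) {X : C} (R : Presieve X) : Prop :=
  ∀ t₁ t₂ : F.obj (op X),
    (∀ ⦃Z : C⦄ ⦃g : Z ⟶ X⦄, R g → F.map g.op t₁ = F.map g.op t₂) → t₁ = t₂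

variable {F : Cᵒᵖ ⥤ Type w}

lemma extFor_simple
    (hpb : ∀ Q ∈ P, IsPullback (F.map Q.p.op) (F.map Q.e.op) (F.map Q.top.op) (F.map Q.left.op))
    {X : C} {T : Presieve X} (hT : IsSimpleCovering P T) : ExtFor F T := by
  induction hT with
  | of_iso f hf =>
    intro t₁ t₂ h
    haveI := hf
    have hinj : Function.Injective (F.map f.op) :=
      ((isIso_iff_bijective (F.map f.op)).1 inferInstance).1
    exact hinj (h Presieve.singleton.mk)
  | of_square Q hQ Sy Sa hy ha ihy iha =>
    intro t₁ t₂ h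
    have hp : F.map Q.p.op t₁ = F.map Q.p.op t₂ := by
      refine ihy _ _ fun Z g hg => ?_
      have := h (Or.inl ⟨g, hg, rfl⟩)
      rw [op_comp, FunctorToTypes.map_comp_apply, FunctorToTypes.map_comp_apply] at this
      exact this
    have he : F.map Q.e.op t₁ = F.map Q.e.op t₂ := by
      refine iha _ _ fun Z g hg => ?_
      have := h (Or.inr ⟨g, hg, rfl⟩)
      rw [op_comp, FunctorToTypes.map_comp_apply, FunctorToTypes.map_comp_apply] at this
      exact this
    exact type_pb_inj (hpb Q hQ) hp he

lemma subsingleton_of_iso_bot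
    (h0 : Nonempty (F.obj (op (⊥_ C))) ∧ Subsingleton (F.obj (op (⊥_ C))))
    {X : C} (i : X ≅ ⊥_ C) :
    Nonempty (F.obj (op X)) ∧ Subsingleton (F.obj (op X)) := by
  have e : F.obj (op (⊥_ C)) ≃ F.obj (op X) := (F.mapIso i.op).toEquiv
  haveI := h0.2
  exact ⟨h0.1.map e, e.symm.subsingleton⟩

lemma extFor_cover (hcomp : IsCompleteCd P)
    (h0 : Nonempty (F.obj (op (⊥_ C))) ∧ Subsingleton (F.obj (op (⊥_ C))))
    (hpb : ∀ Q ∈ P, IsPullback (F.map Q.p.op) (F.map Q.e.op) (F.map Q.top.op) (F.map Q.left.op))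
    {X : C} {S : Sieve X} (hS : S ∈ cdTopology P X) : ExtFor F (S : Presieve X) := by
  by_cases hX : Nonempty (X ≅ ⊥_ C)
  · obtain ⟨i⟩ := hX
    haveI := (subsingleton_of_iso_bot h0 i).2
    intro t₁ t₂ _
    exact Subsingleton.elim _ _
  · obtain ⟨T, hT, hle⟩ := hcomp X S hX hS
    intro t₁ t₂ h
    exact extFor_simple hpb hT t₁ t₂ fun Z g hg => h (hle _ (Sieve.le_generate T _ _ hg))

lemma isSheafFor_simple (hcomp : IsCompleteCd P)
    (h0 : Nonempty (F.obj (op (⊥_ C))) ∧ Subsingleton (F.obj (op (⊥_ C))))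
    (hpb : ∀ Q ∈ P, IsPullback (F.map Q.p.op) (F.map Q.e.op) (F.map Q.top.op) (F.map Q.left.op))
    {X : C} {T : Presieve X} (hT : IsSimpleCovering P T) :
    Presieve.IsSheafFor F T := by
  induction hT with
  | of_iso f hf =>
    intro x hx
    haveI := hf
    haveI : IsIso (F.map f.op) := inferInstance
    have hinj : Function.Injective (F.map f.op) :=
      ((isIso_iff_bijective (F.map f.op)).1 inferInstance).1
    refine ⟨inv (F.map f.op) (x f Presieve.singleton.mk), ?_, ?_⟩
    · rintro Z g hg
      cases hg
      have : F.map f.op (inv (F.map f.op) (x f Presieve.singleton.mk))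
          = x f Presieve.singleton.mk := ConcreteCategory.congr_hom (IsIso.inv_hom_id (F.map f.op)) _
      exact this
    · intro t' ht'
      apply hinj
      rw [ht' f Presieve.singleton.mk]
      exact (ConcreteCategory.congr_hom (IsIso.inv_hom_id (F.map f.op)) _).symm
  | of_square Q hQ Sy Sa hy ha ihy iha =>
    intro x hx
    -- the induced families on Sy and Sa
    set xy : Presieve.FamilyOfElements F Sy :=
      fun Z h hh => x (h ≫ Q.p) (Or.inl ⟨h, hh, rfl⟩) with hxydef
    set xa : Presieve.FamilyOfElements F Sa :=
      fun Z h hh => x (h ≫ Q.e) (Or.inr ⟨h, hh, rfl⟩) with hxadef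
    have hxy : xy.Compatible := by
      intro Z₁ Z₂ W g₁ g₂ f₁ f₂ h₁ h₂ hcm
      exact hx g₁ g₂ (Or.inl ⟨f₁, h₁, rfl⟩) (Or.inl ⟨f₂, h₂, rfl⟩)
        (by rw [← Category.assoc, ← Category.assoc, hcm])
    have hxa : xa.Compatible := by
      intro Z₁ Z₂ W g₁ g₂ f₁ f₂ h₁ h₂ hcm
      exact hx g₁ g₂ (Or.inr ⟨f₁, h₁, rfl⟩) (Or.inr ⟨f₂, h₂, rfl⟩)
        (by rw [← Category.assoc, ← Category.assoc, hcm])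
    obtain ⟨y, hyam, hyuniq⟩ := ihy xy hxy
    obtain ⟨a, haam, hauniq⟩ := iha xa hxa
    -- the extended family on the generated sieve
    set xb := x.sieveExtend with hxbdef
    have hsc : xb.SieveCompatible := (Presieve.compatible_iff_sieveCompatible _).1 hx.sieveExtend
    have hT₀ : IsSimpleCovering P (fun Z g =>
        (∃ (h : Z ⟶ Q.Y), Sy h ∧ g = h ≫ Q.p) ∨ (∃ (h : Z ⟶ Q.A), Sa h ∧ g = h ≫ Q.e)) :=
      IsSimpleCovering.of_square Q hQ Sy Sa hy ha
    -- key: restriction of y along any c with c ≫ p in the generated sieve computes xb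
    have keyY : ∀ {V : C} (c : V ⟶ Q.Y)
        (hg : (Sieve.generate _) (c ≫ Q.p)), F.map c.op y = xb (c ≫ Q.p) hg := by
      intro V c hg
      have hcov : (Sieve.generate Sy).pullback c ∈ cdTopology P V :=
        (cdTopology P).pullback_stable c (generate_simple_mem hy)
      refine extFor_cover hcomp h0 hpb hcov _ _ ?_
      intro U u hu
      obtain ⟨V', l, m, hm, hlm⟩ := hu
      have hmem : Sieve.generate
          (fun Z g => (∃ (h : Z ⟶ Q.Y), Sy h ∧ g = h ≫ Q.p)
            ∨ (∃ (h : Z ⟶ Q.A), Sa h ∧ g = h ≫ Q.e)) (m ≫ Q.p) :=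
        Sieve.le_generate _ _ _ (Or.inl ⟨m, hm, rfl⟩)
      have e1 : F.map u.op (F.map c.op y) = F.map l.op (F.map m.op y) := by
        rw [← FunctorToTypes.map_comp_apply, ← FunctorToTypes.map_comp_apply,
          ← op_comp, ← op_comp, hlm]
      have e2 : F.map m.op y = xb (m ≫ Q.p) hmem := by
        rw [hyam m hm]
        exact (Presieve.extend_agrees hx (Or.inl ⟨m, hm, rfl⟩)).symm
      have e3 : F.map l.op (xb (m ≫ Q.p) hmem) = xb (l ≫ (m ≫ Q.p)) (Sieve.downward_closed _ hmem l) :=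
        (hsc (m ≫ Q.p) l hmem).symm
      have e4 : xb (l ≫ (m ≫ Q.p)) (Sieve.downward_closed _ hmem l)
          = xb (u ≫ (c ≫ Q.p)) (Sieve.downward_closed _ hg u) :=
        family_congr xb (by rw [← Category.assoc, hlm, Category.assoc]) _ _
      have e5 : xb (u ≫ (c ≫ Q.p)) (Sieve.downward_closed _ hg u)
          = F.map u.op (xb (c ≫ Q.p) hg) := hsc (c ≫ Q.p) u hg
      rw [e1, e2, e3, e4, e5]
    have keyA : ∀ {V : C} (c : V ⟶ Q.A)
        (hg : (Sieve.generate _) (c ≫ Q.e)), F.map c.op a = xb (c ≫ Q.e) hg := by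
      intro V c hg
      have hcov : (Sieve.generate Sa).pullback c ∈ cdTopology P V :=
        (cdTopology P).pullback_stable c (generate_simple_mem ha)
      refine extFor_cover hcomp h0 hpb hcov _ _ ?_
      intro U u hu
      obtain ⟨V', l, m, hm, hlm⟩ := hu
      have hmem : Sieve.generate
          (fun Z g => (∃ (h : Z ⟶ Q.Y), Sy h ∧ g = h ≫ Q.p)
            ∨ (∃ (h : Z ⟶ Q.A), Sa h ∧ g = h ≫ Q.e)) (m ≫ Q.e) :=
        Sieve.le_generate _ _ _ (Or.inr ⟨m, hm, rfl⟩)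
      have e1 : F.map u.op (F.map c.op a) = F.map l.op (F.map m.op a) := by
        rw [← FunctorToTypes.map_comp_apply, ← FunctorToTypes.map_comp_apply,
          ← op_comp, ← op_comp, hlm]
      have e2 : F.map m.op a = xb (m ≫ Q.e) hmem := by
        rw [haam m hm]
        exact (Presieve.extend_agrees hx (Or.inr ⟨m, hm, rfl⟩)).symm
      have e3 : F.map l.op (xb (m ≫ Q.e) hmem) = xb (l ≫ (m ≫ Q.e)) (Sieve.downward_closed _ hmem l) :=
        (hsc (m ≫ Q.e) l hmem).symm
      have e4 : xb (l ≫ (m ≫ Q.e)) (Sieve.downward_closed _ hmem l)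
          = xb (u ≫ (c ≫ Q.e)) (Sieve.downward_closed _ hg u) :=
        family_congr xb (by rw [← Category.assoc, hlm, Category.assoc]) _ _
      have e5 : xb (u ≫ (c ≫ Q.e)) (Sieve.downward_closed _ hg u)
          = F.map u.op (xb (c ≫ Q.e) hg) := hsc (c ≫ Q.e) u hg
      rw [e1, e2, e3, e4, e5]
    -- the two restrictions to B agree
    have hba : F.map Q.top.op y = F.map Q.left.op a := by
      have hcov : (Sieve.generate _).pullback (Q.top ≫ Q.p) ∈ cdTopology P Q.B :=
        (cdTopology P).pullback_stable (Q.top ≫ Q.p) (generate_simple_mem hT₀)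
      refine extFor_cover hcomp h0 hpb hcov _ _ ?_
      intro V v hv
      have hv' : (Sieve.generate (fun Z g => (∃ (h : Z ⟶ Q.Y), Sy h ∧ g = h ≫ Q.p)
          ∨ (∃ (h : Z ⟶ Q.A), Sa h ∧ g = h ≫ Q.e))) ((v ≫ Q.top) ≫ Q.p) := by
        rw [Category.assoc]; exact hv
      have hv'' : (Sieve.generate (fun Z g => (∃ (h : Z ⟶ Q.Y), Sy h ∧ g = h ≫ Q.p)
          ∨ (∃ (h : Z ⟶ Q.A), Sa h ∧ g = h ≫ Q.e))) ((v ≫ Q.left) ≫ Q.e) := by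
        rw [Category.assoc, ← Q.comm, ← Category.assoc]
        exact hv'
      have h1 : F.map v.op (F.map Q.top.op y) = xb ((v ≫ Q.top) ≫ Q.p) hv' := by
        rw [← FunctorToTypes.map_comp_apply, ← op_comp]
        exact keyY (v ≫ Q.top) hv'
      have h2 : F.map v.op (F.map Q.left.op a) = xb ((v ≫ Q.left) ≫ Q.e) hv'' := by
        rw [← FunctorToTypes.map_comp_apply, ← op_comp]
        exact keyA (v ≫ Q.left) hv''
      rw [h1, h2]
      exact family_congr xb (by rw [Category.assoc, Category.assoc, Q.comm]) _ _
    obtain ⟨t, htp, hte⟩ := type_pb_exists (hpb Q hQ) hba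
    refine ⟨t, ?_, ?_⟩
    · rintro Z g (⟨h, hh, rfl⟩ | ⟨h, hh, rfl⟩)
      · rw [op_comp, FunctorToTypes.map_comp_apply, htp, hyam h hh]
      · rw [op_comp, FunctorToTypes.map_comp_apply, hte, haam h hh]
    · intro t' ht'
      have h1 : xy.IsAmalgamation (F.map Q.p.op t') := by
        intro Z h hh
        rw [← FunctorToTypes.map_comp_apply, ← op_comp]
        exact ht' (h ≫ Q.p) (Or.inl ⟨h, hh, rfl⟩)
      have h2 : xa.IsAmalgamation (F.map Q.e.op t') := by
        intro Z h hh
        rw [← FunctorToTypes.map_comp_apply, ← op_comp]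
        exact ht' (h ≫ Q.e) (Or.inr ⟨h, hh, rfl⟩)
      exact type_pb_inj (hpb Q hQ) (by rw [hyuniq _ h1, htp]) (by rw [hauniq _ h2, hte])

/-- The coverage consisting of the simple coverings, together with the empty covering
of any object isomorphic to the initial object. -/
def cdCoverage (P : Set (CDSquare C)) (hcomp : IsCompleteCd P) : Coverage C where
  coverings X := {T | IsSimpleCovering P T ∨ (Nonempty (X ≅ ⊥_ C) ∧ T = ⊥)}
  pullback := by
    intro X Z f T hT
    rcases hT with hT | ⟨hX, rfl⟩
    · by_cases hZ : Nonempty (Z ≅ ⊥_ C)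
      · exact ⟨⊥, Or.inr ⟨hZ, rfl⟩, fun W g hg => hg.elim⟩
      · have hmem : (Sieve.generate T).pullback f ∈ cdTopology P Z :=
          (cdTopology P).pullback_stable f (generate_simple_mem hT)
        obtain ⟨T', hT', hle⟩ := hcomp Z _ hZ hmem
        refine ⟨T', Or.inl hT', ?_⟩
        intro W g hg
        obtain ⟨V, l, m, hm, hlm⟩ := hle _ (Sieve.le_generate T' _ _ hg)
        exact ⟨V, l, m, hm, hlm⟩
    · obtain ⟨i⟩ := hX
      have hZ : Nonempty (Z ≅ ⊥_ C) := nonempty_iso_bot hcomp (f ≫ i.hom)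
      exact ⟨⊥, Or.inr ⟨hZ, rfl⟩, fun W g hg => hg.elim⟩

lemma cdTopology_le (hcomp : IsCompleteCd P) :
    cdTopology P ≤ (cdCoverage P hcomp).toGrothendieck := by
  apply sInf_le
  refine ⟨?_, ?_⟩
  · have h := Coverage.Saturate.of (K := cdCoverage P hcomp) (⊥_ C) ⊥
      (Or.inr ⟨⟨Iso.refl _⟩, rfl⟩)
    have hgen : Sieve.generate (⊥ : Presieve (⊥_ C)) = ⊥ := by
      apply le_antisymm _ bot_le
      rw [Sieve.generate_le_iff]
      intro Z g hg
      exact hg.elim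
    rwa [hgen] at h
  · intro Q hQ
    have hsimp : IsSimpleCovering P (fun Z g =>
        (∃ h : Z ⟶ Q.Y, Presieve.singleton (𝟙 Q.Y) h ∧ g = h ≫ Q.p) ∨
        (∃ h : Z ⟶ Q.A, Presieve.singleton (𝟙 Q.A) h ∧ g = h ≫ Q.e)) :=
      IsSimpleCovering.of_square Q hQ _ _
        (IsSimpleCovering.of_iso _ inferInstance) (IsSimpleCovering.of_iso _ inferInstance)
    have h := Coverage.Saturate.of (K := cdCoverage P hcomp) Q.X _ (Or.inl hsimp)
    refine GrothendieckTopology.superset_covering _ ?_ h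
    rw [Sieve.generate_le_iff]
    rintro Z g (⟨h', hh, rfl⟩ | ⟨h', hh, rfl⟩)
    · exact Or.inl ⟨h', rfl⟩
    · exact Or.inr ⟨h', rfl⟩

end CdProofAux

theorem statement5 (P : Set (CDSquare C)) (hP : IsCdStructure P) (hcomp : IsCompleteCd P)
    (F : Cᵒᵖ ⥤ Type w)
    (h0 : Nonempty (F.obj (op (⊥_ C))) ∧ Subsingleton (F.obj (op (⊥_ C))))
    (hpb : ∀ Q ∈ P, IsPullback (F.map Q.p.op) (F.map Q.e.op) (F.map Q.top.op) (F.map Q.left.op)) :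
    Presheaf.IsSheaf (cdTopology P) F := by
  rw [isSheaf_iff_isSheaf_of_type]
  refine Presieve.isSheaf_of_le F (CdProofAux.cdTopology_le hcomp) ?_
  rw [Presieve.isSheaf_coverage]
  intro X R hR
  rcases hR with hR | ⟨⟨i⟩, rfl⟩
  · exact CdProofAux.isSheafFor_simple hcomp h0 hpb hR
  · intro x hx
    obtain ⟨hne, hsub⟩ := CdProofAux.subsingleton_of_iso_bot h0 i
    obtain ⟨t⟩ := hne
    exact ⟨t, fun Z g hg => hg.elim, fun t' _ => hsub.elim t' t⟩
end

section
/- Let C be a chunky category. Then the additive cd-structure P_add, consisting of all squares of the form ∅ → X, ∅ → Y, X → X ⊔ Y, Y → X ⊔ Y, is complete, regular, and bounded. -/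
open CategoryTheory CategoryTheory.Limits Opposite

universe v u
variable {C : Type u} [Category.{v} C]

variable [HasInitial C]

/-- A density structure on a category with an initial object. -/
structure DensityStructure (C : Type u) [Category.{v} C] [HasInitial C] where
  D : ℕ → ∀ X : C, Set ((U : C) × (U ⟶ X))
  init_mem : ∀ X : C, ⟨⊥_ C, initial.to X⟩ ∈ D 0 X
  iso_mem : ∀ (n : ℕ) (X U : C) (f : U ⟶ X), IsIso f → ⟨U, f⟩ ∈ D n X
  antitone : ∀ (n : ℕ) (X : C), D (n + 1) X ⊆ D n X
  comp_mem : ∀ (n : ℕ) (X U V : C) (j : U ⟶ V) (j' : V ⟶ X),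
    ⟨U, j⟩ ∈ D n V → ⟨V, j'⟩ ∈ D n X → ⟨U, j ≫ j'⟩ ∈ D n X

/-- `X` has dimension `≤ n` with respect to a density structure. -/
def DensityStructure.DimLE {C : Type u} [Category.{v} C] [HasInitial C]
    (DS : DensityStructure C) (X : C) (n : ℕ) : Prop :=
  ∀ (U : C) (f : U ⟶ X), ⟨U, f⟩ ∈ DS.D (n + 1) X → IsIso f

/-- A density structure is locally of finite dimension. -/
def DensityStructure.LocallyFiniteDim {C : Type u} [Category.{v} C] [HasInitial C]
    (DS : DensityStructure C) : Prop :=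
  ∀ X : C, ∃ n, DS.DimLE X n


/-- A distinguished square is reducing with respect to a density structure. -/
def IsReducingSquare (P : Set (CDSquare C)) (DS : DensityStructure C) (Q : CDSquare C) : Prop :=
  ∀ (i : ℕ) (B₀ : (U : C) × (U ⟶ Q.B)) (A₀ : (U : C) × (U ⟶ Q.A))
    (Y₀ : (U : C) × (U ⟶ Q.Y)),
    B₀ ∈ DS.D i Q.B → A₀ ∈ DS.D (i + 1) Q.A → Y₀ ∈ DS.D (i + 1) Q.Y →
    ∃ X' ∈ DS.D (i + 1) Q.X, ∃ Q' ∈ P, ∃ φ : CDSquareHom Q' Q, ∃ iX : Q'.X ≅ X'.1,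
      φ.hX = iX.hom ≫ X'.2 ∧
      (∃ b : Q'.B ⟶ B₀.1, φ.hB = b ≫ B₀.2) ∧
      (∃ a : Q'.A ⟶ A₀.1, φ.hA = a ≫ A₀.2) ∧
      (∃ y : Q'.Y ⟶ Y₀.1, φ.hY = y ≫ Y₀.2)

/-- `Q'` is a refinement of `Q`: a morphism of squares which is the identity on the lower
right corner. -/
def IsRefinement (Q' Q : CDSquare C) : Prop :=
  ∃ φ : CDSquareHom Q' Q, ∃ h : Q'.X = Q.X, φ.hX = eqToHom h

/-- A density structure is reducing for a cd-structure if every distinguished square has a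
reducing refinement. -/
def IsReducingDensity (P : Set (CDSquare C)) (DS : DensityStructure C) : Prop :=
  ∀ Q ∈ P, ∃ Q' ∈ P, IsRefinement Q' Q ∧ IsReducingSquare P DS Q'

/-- A cd-structure is bounded if it admits a reducing density structure which is locally of
finite dimension. -/
def IsBoundedCd (P : Set (CDSquare C)) : Prop :=
  ∃ DS : DensityStructure C, IsReducingDensity P DS ∧ DS.LocallyFiniteDim

variable {E : Type u} [SmallCategory E] [HasInitial E] [HasFiniteCoproducts E]

/-- A small category with initial object and finite coproducts is chunky. -/
def IsChunky (E : Type u) [SmallCategory E] [HasInitial E] [HasFiniteCoproducts E] : Prop :=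
  (∀ (Z : E) (f : Z ⟶ ⊥_ E), IsIso f) ∧
  (∀ X Y : E, IsPullback (initial.to X) (initial.to Y)
    (coprod.inl : X ⟶ X ⨿ Y) (coprod.inr : Y ⟶ X ⨿ Y)) ∧
  (∀ (X Y Z : E) (f : Z ⟶ X ⨿ Y),
    ∃ (Zx Zy : E) (px : Zx ⟶ Z) (qx : Zx ⟶ X) (py : Zy ⟶ Z) (qy : Zy ⟶ Y),
      IsPullback px qx f coprod.inl ∧ IsPullback py qy f coprod.inr ∧
      Nonempty (IsColimit (BinaryCofan.mk px py)))

/-- The canonical coproduct square `∅, X, Y, X ⊔ Y`. -/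
noncomputable def coprodSquare (X Y : E) : CDSquare E where
  B := ⊥_ E
  Y := X
  A := Y
  X := X ⨿ Y
  top := initial.to X
  left := initial.to Y
  p := coprod.inl
  e := coprod.inr
  comm := Subsingleton.elim _ _

/-- The additive cd-structure: all squares isomorphic to a coproduct square. -/
def addCd (E : Type u) [SmallCategory E] [HasInitial E] [HasFiniteCoproducts E] :
    Set (CDSquare E) :=
  {Q | ∃ X Y : E, CDSquare.Iso Q (coprodSquare X Y)}

/-- `ρ(U)`: the `t_P`-sheaf associated with the presheaf represented by `U`. -/
noncomputable def cdRho (P : Set (CDSquare E)) : E ⥤ Sheaf (cdTopology P) (Type u) :=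
  yoneda ⋙ presheafToSheaf (cdTopology P) (Type u)

instance cdSheafHasColimitPair (P : Set (CDSquare E)) (X Y : Sheaf (cdTopology P) (Type u)) :
    HasColimit (pair X Y) :=
  (Sheaf.instHasColimitsOfShape : HasColimitsOfShape (Discrete WalkingPair) _).has_colimit _

/-- For a distinguished square `Q`, the canonical morphism
`ρ(Y) ⨿ (ρ(B) ×_{ρ(A)} ρ(B)) ⟶ ρ(Y) ×_{ρ(X)} ρ(Y)` whose components are the diagonal and
the square of the morphism `ρ(B) ⟶ ρ(Y)`. -/
noncomputable def cdRegComparison (P : Set (CDSquare E)) (Q : CDSquare E) :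
    ((cdRho P).obj Q.Y) ⨿ (pullback ((cdRho P).map Q.left) ((cdRho P).map Q.left)) ⟶
      pullback ((cdRho P).map Q.p) ((cdRho P).map Q.p) :=
  coprod.desc (pullback.lift (𝟙 _) (𝟙 _) rfl)
    (pullback.lift (pullback.fst _ _ ≫ (cdRho P).map Q.top)
      (pullback.snd _ _ ≫ (cdRho P).map Q.top)
      (by
        have h : (cdRho P).map Q.top ≫ (cdRho P).map Q.p
            = (cdRho P).map Q.left ≫ (cdRho P).map Q.e := by
          rw [← Functor.map_comp, ← Functor.map_comp, Q.comm]
        rw [Category.assoc, Category.assoc, h, ← Category.assoc, ← Category.assoc,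
          pullback.condition]))

/-- A cd-structure is regular if every distinguished square is a pullback square, `e` is a
monomorphism and the canonical comparison morphism of sheaves is an epimorphism. -/
def IsRegularCd (P : Set (CDSquare E)) : Prop :=
  ∀ Q ∈ P, IsPullback Q.top Q.left Q.p Q.e ∧ Mono Q.e ∧ Epi (cdRegComparison P Q)

set_option linter.unusedSectionVars false

/-! ### auxiliary lemmas -/

set_option linter.unusedSectionVars false

section Aux

attribute [local simp] coprod.inl_desc coprod.inr_desc coprod.inl_desc_assoc coprod.inr_desc_assoc

lemma aux_inl_iso (A B : E) (hB : IsInitial B) : IsIso (coprod.inl : A ⟶ A ⨿ B) := by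
  refine ⟨coprod.desc (𝟙 A) (hB.to A), by simp, ?_⟩
  apply coprod.hom_ext <;> simp
  exact hB.hom_ext _ _

lemma aux_inr_iso (A B : E) (hA : IsInitial A) : IsIso (coprod.inr : B ⟶ A ⨿ B) := by
  refine ⟨coprod.desc (hA.to B) (𝟙 B), by simp, ?_⟩
  apply coprod.hom_ext <;> simp
  exact hA.hom_ext _ _

lemma aux_coprod_initial (A B : E) (hA : IsInitial A) (hB : IsInitial B) :
    Nonempty ((A ⨿ B) ≅ ⊥_ E) := by
  have h : IsInitial (A ⨿ B) := by
    refine IsInitial.ofUniqueHom (fun W => coprod.desc (hA.to W) (hB.to W)) (fun W m => ?_)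
    apply coprod.hom_ext
    · exact hA.hom_ext _ _
    · exact hB.hom_ext _ _
  exact ⟨h.uniqueUpToIso initialIsInitial⟩

lemma aux_cofan_inl_iso {A B X : E} (f : A ⟶ X) (g : B ⟶ X)
    (hc : IsColimit (BinaryCofan.mk f g)) (hB : IsInitial B) : IsIso f := by
  refine ⟨hc.desc (BinaryCofan.mk (𝟙 A) (hB.to A)), hc.fac _ ⟨WalkingPair.left⟩, ?_⟩
  apply BinaryCofan.IsColimit.hom_ext hc
  · have := hc.fac (BinaryCofan.mk (𝟙 A) (hB.to A)) ⟨WalkingPair.left⟩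
    simp at this ⊢
    exact (Category.assoc _ _ _).symm.trans ((congrArg (· ≫ f) this).trans
      ((Category.id_comp f).trans (Category.comp_id f).symm))
  · exact hB.hom_ext _ _

lemma aux_cofan_inr_iso {A B X : E} (f : A ⟶ X) (g : B ⟶ X)
    (hc : IsColimit (BinaryCofan.mk f g)) (hA : IsInitial A) : IsIso g := by
  refine ⟨hc.desc (BinaryCofan.mk (hA.to B) (𝟙 B)), hc.fac _ ⟨WalkingPair.right⟩, ?_⟩
  apply BinaryCofan.IsColimit.hom_ext hc
  · exact hA.hom_ext _ _
  · have := hc.fac (BinaryCofan.mk (hA.to B) (𝟙 B)) ⟨WalkingPair.right⟩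
    simp at this ⊢
    exact (Category.assoc _ _ _).symm.trans ((congrArg (· ≫ g) this).trans
      ((Category.id_comp g).trans (Category.comp_id g).symm))

noncomputable def aux_isInitial_of_iso_bot {Z : E} (h : Nonempty (Z ≅ ⊥_ E)) : IsInitial Z :=
  initialIsInitial.ofIso h.some.symm

noncomputable def cofanSquare {Zx Zy Z : E} (px : Zx ⟶ Z) (py : Zy ⟶ Z) : CDSquare E :=
  ⟨⊥_ E, Zx, Zy, Z, initial.to _, initial.to _, px, py, Subsingleton.elim _ _⟩

lemma cofanSquare_mem {Zx Zy Z : E} (px : Zx ⟶ Z) (py : Zy ⟶ Z)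
    (hc : IsColimit (BinaryCofan.mk px py)) : cofanSquare px py ∈ addCd E := by
  have hfacl := hc.fac (BinaryCofan.mk (coprod.inl : Zx ⟶ Zx ⨿ Zy) coprod.inr) ⟨WalkingPair.left⟩
  have hfacr := hc.fac (BinaryCofan.mk (coprod.inl : Zx ⟶ Zx ⨿ Zy) coprod.inr) ⟨WalkingPair.right⟩
  simp at hfacl hfacr
  refine ⟨Zx, Zy,
    ⟨𝟙 _, 𝟙 _, 𝟙 _, hc.desc (BinaryCofan.mk coprod.inl coprod.inr),
      by dsimp [cofanSquare, coprodSquare]; exact Subsingleton.elim _ _,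
      by dsimp [cofanSquare, coprodSquare]; exact Subsingleton.elim _ _,
      by exact hfacl.trans (Category.id_comp _).symm,
      by exact hfacr.trans (Category.id_comp _).symm⟩,
    IsIso.id _, IsIso.id _, IsIso.id _, ?_⟩
  refine ⟨coprod.desc px py, ?_, ?_⟩
  · apply BinaryCofan.IsColimit.hom_ext hc
    · exact (Category.assoc _ _ _).symm.trans ((congrArg (· ≫ coprod.desc px py) hfacl).trans
        ((coprod.inl_desc _ _).trans (Category.comp_id _).symm))
    · exact (Category.assoc _ _ _).symm.trans ((congrArg (· ≫ coprod.desc px py) hfacr).trans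
        ((coprod.inr_desc _ _).trans (Category.comp_id _).symm))
  · apply coprod.hom_ext
    · exact (coprod.inl_desc_assoc _ _ _).trans (hfacl.trans (Category.comp_id _).symm)
    · exact (coprod.inr_desc_assoc _ _ _).trans (hfacr.trans (Category.comp_id _).symm)

lemma compIsoSquare_mem {Q : CDSquare E} (hQ : Q ∈ addCd E) {X' : E} (f : Q.X ⟶ X')
    (hf : IsIso f) :
    (⟨Q.B, Q.Y, Q.A, X', Q.top, Q.left, Q.p ≫ f, Q.e ≫ f,
      by rw [← Category.assoc, Q.comm, Category.assoc]⟩ : CDSquare E) ∈ addCd E := by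
  obtain ⟨A, B, φ, iB, iY, iA, iX⟩ := hQ
  exact ⟨A, B, ⟨φ.hB, φ.hY, φ.hA, inv f ≫ φ.hX, φ.commTop, φ.commLeft,
    by simp [← φ.commP], by simp [← φ.commE]⟩, iB, iY, iA, inferInstance⟩

lemma botBSquare_mem {Q : CDSquare E} (hQ : Q ∈ addCd E) :
    (⟨⊥_ E, Q.Y, Q.A, Q.X, initial.to _, initial.to _, Q.p, Q.e,
      Subsingleton.elim _ _⟩ : CDSquare E) ∈ addCd E := by
  obtain ⟨A, B, φ, iB, iY, iA, iX⟩ := hQ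
  exact ⟨A, B, ⟨𝟙 _, φ.hY, φ.hA, φ.hX, Subsingleton.elim _ _, Subsingleton.elim _ _,
    φ.commP, φ.commE⟩, IsIso.id _, iY, iA, iX⟩

lemma aux_mono_inl (hE : IsChunky E) (A B : E) : Mono (coprod.inl : A ⟶ A ⨿ B) := by
  obtain ⟨Zx, Zy, px, qx, py, qy, pbx, pby, ⟨hc⟩⟩ := hE.2.2 A B A coprod.inl
  have hinit : IsInitial Zy := by
    have l := (hE.2.1 A B).lift py qy pby.w
    haveI := hE.1 Zy l
    exact aux_isInitial_of_iso_bot ⟨asIso l⟩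
  have hpx : IsIso px := aux_cofan_inl_iso px py hc hinit
  have hd1 : pbx.lift (𝟙 A) (𝟙 A) rfl ≫ px = 𝟙 A := pbx.lift_fst _ _ _
  have hd2 : pbx.lift (𝟙 A) (𝟙 A) rfl ≫ qx = 𝟙 A := pbx.lift_snd _ _ _
  have hpq : qx = px := by
    have h2 : px ≫ pbx.lift (𝟙 A) (𝟙 A) rfl = 𝟙 Zx := by
      rw [← IsIso.eq_comp_inv] at hd1
      rw [hd1]; simp
    calc qx = (px ≫ pbx.lift (𝟙 A) (𝟙 A) rfl) ≫ qx := by rw [h2]; simp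
    _ = px := by rw [Category.assoc, hd2]; simp
  constructor
  intro W a b hab
  have ha := pbx.lift_fst a b hab
  have hb := pbx.lift_snd a b hab
  exact ha.symm.trans ((congrArg (fun m => pbx.lift a b hab ≫ m) hpq.symm).trans hb)

lemma aux_mono_inr (hE : IsChunky E) (A B : E) : Mono (coprod.inr : B ⟶ A ⨿ B) := by
  obtain ⟨Zx, Zy, px, qx, py, qy, pbx, pby, ⟨hc⟩⟩ := hE.2.2 A B B coprod.inr
  have hinit : IsInitial Zx := by
    have l := (hE.2.1 A B).lift qx px pbx.w.symm
    haveI := hE.1 Zx l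
    exact aux_isInitial_of_iso_bot ⟨asIso l⟩
  have hpy : IsIso py := aux_cofan_inr_iso px py hc hinit
  have hd1 : pby.lift (𝟙 B) (𝟙 B) rfl ≫ py = 𝟙 B := pby.lift_fst _ _ _
  have hd2 : pby.lift (𝟙 B) (𝟙 B) rfl ≫ qy = 𝟙 B := pby.lift_snd _ _ _
  have hpq : qy = py := by
    have h2 : py ≫ pby.lift (𝟙 B) (𝟙 B) rfl = 𝟙 Zy := by
      rw [← IsIso.eq_comp_inv] at hd1
      rw [hd1]; simp
    calc qy = (py ≫ pby.lift (𝟙 B) (𝟙 B) rfl) ≫ qy := by rw [h2]; simp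
    _ = py := by rw [Category.assoc, hd2]; simp
  constructor
  intro W a b hab
  have ha := pby.lift_fst a b hab
  have hb := pby.lift_snd a b hab
  exact ha.symm.trans ((congrArg (fun m => pby.lift a b hab ≫ m) hpq.symm).trans hb)

lemma aux_p_eq {Q : CDSquare E} {A B : E} (φ : CDSquareHom Q (coprodSquare A B))
    (iX : IsIso φ.hX) : Q.p = φ.hY ≫ (coprodSquare A B).p ≫ inv φ.hX := by
  have := φ.commP
  rw [← IsIso.eq_comp_inv] at this
  rw [this]; simp [coprodSquare]

lemma aux_e_eq {Q : CDSquare E} {A B : E} (φ : CDSquareHom Q (coprodSquare A B))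
    (iX : IsIso φ.hX) : Q.e = φ.hA ≫ (coprodSquare A B).e ≫ inv φ.hX := by
  have := φ.commE
  rw [← IsIso.eq_comp_inv] at this
  rw [this]; simp [coprodSquare]

lemma aux_mono_p (hE : IsChunky E) {Q : CDSquare E} (hQ : Q ∈ addCd E) : Mono Q.p := by
  obtain ⟨A, B, φ, iB, iY, iA, iX⟩ := hQ
  haveI := iY; haveI := iX
  rw [aux_p_eq φ iX]
  haveI : Mono (coprodSquare A B).p := aux_mono_inl hE A B
  exact mono_comp _ _

lemma aux_mono_e (hE : IsChunky E) {Q : CDSquare E} (hQ : Q ∈ addCd E) : Mono Q.e := by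
  obtain ⟨A, B, φ, iB, iY, iA, iX⟩ := hQ
  haveI := iA; haveI := iX
  rw [aux_e_eq φ iX]
  haveI : Mono (coprodSquare A B).e := aux_mono_inr hE A B
  exact mono_comp _ _

lemma aux_p_iso {Q : CDSquare E} (hQ : Q ∈ addCd E) (hA : Nonempty (Q.A ≅ ⊥_ E)) :
    IsIso Q.p := by
  obtain ⟨A, B, φ, iB, iY, iA, iX⟩ := hQ
  haveI := iY; haveI := iX; haveI := iA
  have hB : IsInitial B := aux_isInitial_of_iso_bot ⟨(asIso φ.hA).symm ≪≫ hA.some⟩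
  haveI : IsIso (coprodSquare A B).p := aux_inl_iso A B hB
  rw [aux_p_eq φ iX]
  infer_instance

lemma aux_e_iso {Q : CDSquare E} (hQ : Q ∈ addCd E) (hY : Nonempty (Q.Y ≅ ⊥_ E)) :
    IsIso Q.e := by
  obtain ⟨A, B, φ, iB, iY, iA, iX⟩ := hQ
  haveI := iY; haveI := iX; haveI := iA
  have hA : IsInitial A := aux_isInitial_of_iso_bot ⟨(asIso φ.hY).symm ≪≫ hY.some⟩
  haveI : IsIso (coprodSquare A B).e := aux_inr_iso A B hA
  rw [aux_e_eq φ iX]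
  infer_instance

lemma aux_X_bot {Q : CDSquare E} (hQ : Q ∈ addCd E) (hY : Nonempty (Q.Y ≅ ⊥_ E))
    (hA : Nonempty (Q.A ≅ ⊥_ E)) : Nonempty (Q.X ≅ ⊥_ E) := by
  obtain ⟨A, B, φ, iB, iY, iA, iX⟩ := hQ
  haveI := iY; haveI := iX; haveI := iA
  have hA' : IsInitial A := aux_isInitial_of_iso_bot ⟨(asIso φ.hY).symm ≪≫ hY.some⟩
  have hB' : IsInitial B := aux_isInitial_of_iso_bot ⟨(asIso φ.hA).symm ≪≫ hA.some⟩
  exact ⟨asIso φ.hX ≪≫ (aux_coprod_initial A B hA' hB').some⟩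

/-! ### Completeness -/

def JCond (X : E) (S : Sieve X) : Prop :=
  Nonempty (X ≅ ⊥_ E) ∨
    ∃ T : Presieve X, IsSimpleCovering (addCd E) T ∧ Sieve.generate T ≤ S

lemma simple_comp_iso {X : E} {T : Presieve X} (hT : IsSimpleCovering (addCd E) T)
    {X' : E} (f : X ⟶ X') (hf : IsIso f) :
    ∃ T' : Presieve X', IsSimpleCovering (addCd E) T' ∧
      ∀ ⦃W : E⦄ (g : W ⟶ X'), T' g → ∃ h : W ⟶ X, T h ∧ g = h ≫ f := by
  cases hT with
  | of_iso k hk =>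
    haveI := hk; haveI := hf
    refine ⟨Presieve.singleton (k ≫ f), IsSimpleCovering.of_iso _ inferInstance, ?_⟩
    intro W g hg
    cases hg
    exact ⟨k, Presieve.singleton.mk, rfl⟩
  | of_square Q hQ Sy Sa hy ha =>
    have hQ2 := compIsoSquare_mem hQ f hf
    refine ⟨_, IsSimpleCovering.of_square _ hQ2 Sy Sa hy ha, ?_⟩
    rintro W g (⟨h, hh, rfl⟩ | ⟨h, hh, rfl⟩)
    · exact ⟨h ≫ Q.p, Or.inl ⟨h, hh, rfl⟩, by simp⟩
    · exact ⟨h ≫ Q.e, Or.inr ⟨h, hh, rfl⟩, by simp⟩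

lemma simple_pullback_s17 (hE : IsChunky E) {X : E} {T : Presieve X}
    (hT : IsSimpleCovering (addCd E) T) :
    ∀ {Z : E} (f : Z ⟶ X), ∃ T' : Presieve Z, IsSimpleCovering (addCd E) T' ∧
      ∀ ⦃W : E⦄ (g : W ⟶ Z), T' g → (Sieve.generate T).arrows (g ≫ f) := by
  induction hT with
  | of_iso k hk =>
    intro Z f
    refine ⟨Presieve.singleton (𝟙 Z), IsSimpleCovering.of_iso _ inferInstance, ?_⟩
    intro W g hg
    cases hg
    haveI := hk
    exact ⟨_, f ≫ inv k, k, Presieve.singleton.mk, by simp⟩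
  | of_square Q hQ Sy Sa hy ha ihy iha =>
    intro Z f
    obtain ⟨A, B, φ, iB, iY, iA, iX⟩ := hQ
    haveI := iY; haveI := iA; haveI := iX
    obtain ⟨Zx, Zy, px, qx, py, qy, pbx, pby, ⟨hc⟩⟩ := hE.2.2 A B Z (f ≫ φ.hX)
    have hfyp : (qx ≫ (inv φ.hY : (coprodSquare A B).Y ⟶ Q.Y)) ≫ Q.p = px ≫ f := by
      rw [← cancel_mono φ.hX]
      have h1 := φ.commP
      simp only [Category.assoc]
      rw [h1]
      have : (coprodSquare A B).p = (coprod.inl : A ⟶ A ⨿ B) := rfl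
      rw [this]
      exact (Category.assoc _ _ _).trans <| (congrArg (qx ≫ ·) (IsIso.inv_hom_id_assoc φ.hY (coprod.inl : A ⟶ A ⨿ B))).trans
        pbx.w.symm
    have hfae : (qy ≫ (inv φ.hA : (coprodSquare A B).A ⟶ Q.A)) ≫ Q.e = py ≫ f := by
      rw [← cancel_mono φ.hX]
      have h1 := φ.commE
      simp only [Category.assoc]
      rw [h1]
      have : (coprodSquare A B).e = (coprod.inr : B ⟶ A ⨿ B) := rfl
      rw [this]
      exact (Category.assoc _ _ _).trans <| (congrArg (qy ≫ ·) (IsIso.inv_hom_id_assoc φ.hA (coprod.inr : B ⟶ A ⨿ B))).trans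
        pby.w.symm
    obtain ⟨Tx, hTx, hTxp⟩ := ihy (qx ≫ (inv φ.hY : (coprodSquare A B).Y ⟶ Q.Y))
    obtain ⟨Ty, hTy, hTyp⟩ := iha (qy ≫ (inv φ.hA : (coprodSquare A B).A ⟶ Q.A))
    have hQZ := cofanSquare_mem px py hc
    refine ⟨_, IsSimpleCovering.of_square _ hQZ Tx Ty hTx hTy, ?_⟩
    rintro W g (⟨h, hh, rfl⟩ | ⟨h, hh, rfl⟩)
    · obtain ⟨V, l, s, hs, hls⟩ := hTxp h hh
      refine ⟨V, l, s ≫ Q.p, Or.inl ⟨s, hs, rfl⟩, ?_⟩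
      show l ≫ (s ≫ Q.p) = (h ≫ px) ≫ f
      calc l ≫ s ≫ Q.p = (l ≫ s) ≫ Q.p := by rw [Category.assoc]
        _ = (h ≫ (qx ≫ (inv φ.hY : (coprodSquare A B).Y ⟶ Q.Y))) ≫ Q.p := congrArg (· ≫ Q.p) hls
        _ = h ≫ ((qx ≫ (inv φ.hY : (coprodSquare A B).Y ⟶ Q.Y)) ≫ Q.p) := Category.assoc _ _ _
        _ = h ≫ (px ≫ f) := congrArg (h ≫ ·) hfyp
        _ = (h ≫ px) ≫ f := (Category.assoc _ _ _).symm
    · obtain ⟨V, l, s, hs, hls⟩ := hTyp h hh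
      refine ⟨V, l, s ≫ Q.e, Or.inr ⟨s, hs, rfl⟩, ?_⟩
      show l ≫ (s ≫ Q.e) = (h ≫ py) ≫ f
      calc l ≫ s ≫ Q.e = (l ≫ s) ≫ Q.e := by rw [Category.assoc]
        _ = (h ≫ (qy ≫ (inv φ.hA : (coprodSquare A B).A ⟶ Q.A))) ≫ Q.e := congrArg (· ≫ Q.e) hls
        _ = h ≫ ((qy ≫ (inv φ.hA : (coprodSquare A B).A ⟶ Q.A)) ≫ Q.e) := Category.assoc _ _ _
        _ = h ≫ (py ≫ f) := congrArg (h ≫ ·) hfae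
        _ = (h ≫ py) ≫ f := (Category.assoc _ _ _).symm

lemma simple_trans (hE : IsChunky E) {X : E} {T : Presieve X}
    (hT : IsSimpleCovering (addCd E) T) :
    ∀ R : Sieve X, (∀ ⦃Z : E⦄ (f : Z ⟶ X), T f → JCond Z (R.pullback f)) → JCond X R := by
  induction hT with
  | of_iso k hk =>
    intro R hR
    haveI := hk
    rcases hR k Presieve.singleton.mk with ⟨⟨i⟩⟩ | ⟨T', hT', hle⟩
    · exact Or.inl ⟨(asIso k).symm ≪≫ i⟩
    · obtain ⟨T'', hT'', hfac⟩ := simple_comp_iso hT' k hk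
      refine Or.inr ⟨T'', hT'', ?_⟩
      rintro W w ⟨V, l, g, hg, rfl⟩
      obtain ⟨h, hh, rfl⟩ := hfac g hg
      have h1 : R.pullback k h := hle _ ⟨_, 𝟙 _, h, hh, Category.id_comp h⟩
      have h2 := R.downward_closed h1 l
      simpa using h2
  | of_square Q hQ Sy Sa hy ha ihy iha =>
    intro R hR
    have hRy : ∀ ⦃Z : E⦄ (f : Z ⟶ Q.Y), Sy f → JCond Z ((R.pullback Q.p).pullback f) := by
      intro Z f hf
      have := hR (f ≫ Q.p) (Or.inl ⟨f, hf, rfl⟩)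
      rwa [Sieve.pullback_comp] at this
    have hRa : ∀ ⦃Z : E⦄ (f : Z ⟶ Q.A), Sa f → JCond Z ((R.pullback Q.e).pullback f) := by
      intro Z f hf
      have := hR (f ≫ Q.e) (Or.inr ⟨f, hf, rfl⟩)
      rwa [Sieve.pullback_comp] at this
    rcases ihy (R.pullback Q.p) hRy with hYbot | ⟨Ty', hTy', hley⟩
    · rcases iha (R.pullback Q.e) hRa with hAbot | ⟨Ta', hTa', hlea⟩
      · exact Or.inl (aux_X_bot hQ hYbot hAbot)
      · have he : IsIso Q.e := aux_e_iso hQ hYbot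
        obtain ⟨T'', hT'', hfac⟩ := simple_comp_iso hTa' Q.e he
        refine Or.inr ⟨T'', hT'', ?_⟩
        rintro W w ⟨V, l, g, hg, rfl⟩
        obtain ⟨h, hh, rfl⟩ := hfac g hg
        have h1 : R.pullback Q.e h := hlea _ ⟨_, 𝟙 _, h, hh, Category.id_comp h⟩
        have h2 := R.downward_closed h1 l
        simpa using h2
    · rcases iha (R.pullback Q.e) hRa with hAbot | ⟨Ta', hTa', hlea⟩
      · have hp : IsIso Q.p := aux_p_iso hQ hAbot
        obtain ⟨T'', hT'', hfac⟩ := simple_comp_iso hTy' Q.p hp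
        refine Or.inr ⟨T'', hT'', ?_⟩
        rintro W w ⟨V, l, g, hg, rfl⟩
        obtain ⟨h, hh, rfl⟩ := hfac g hg
        have h1 : R.pullback Q.p h := hley _ ⟨_, 𝟙 _, h, hh, Category.id_comp h⟩
        have h2 := R.downward_closed h1 l
        simpa using h2
      · refine Or.inr ⟨_, IsSimpleCovering.of_square Q hQ Ty' Ta' hTy' hTa', ?_⟩
        rintro W w ⟨V, l, g, (⟨h, hh, rfl⟩ | ⟨h, hh, rfl⟩), rfl⟩
        · have h1 : R.pullback Q.p h := hley _ ⟨_, 𝟙 _, h, hh, Category.id_comp h⟩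
          have h2 := R.downward_closed h1 l
          simpa using h2
        · have h1 : R.pullback Q.e h := hlea _ ⟨_, 𝟙 _, h, hh, Category.id_comp h⟩
          have h2 := R.downward_closed h1 l
          simpa using h2

def addTopology (hE : IsChunky E) : GrothendieckTopology E where
  sieves X := {S | JCond X S}
  top_mem' X :=
    Or.inr ⟨Presieve.singleton (𝟙 X), IsSimpleCovering.of_iso _ inferInstance, le_top⟩
  pullback_stable' X Y S f hS := by
    rcases hS with ⟨⟨i⟩⟩ | ⟨T, hT, hle⟩
    · haveI := hE.1 Y (f ≫ i.hom)
      exact Or.inl ⟨asIso (f ≫ i.hom)⟩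
    · obtain ⟨T', hT', hfac⟩ := simple_pullback_s17 hE hT f
      refine Or.inr ⟨T', hT', ?_⟩
      rintro W w ⟨V, l, g, hg, rfl⟩
      have h1 := hle _ (hfac g hg)
      have h2 := S.downward_closed h1 l
      simpa using h2
  transitive' X S hS R hR := by
    rcases hS with h | ⟨T, hT, hle⟩
    · exact Or.inl h
    · exact simple_trans hE hT R
        (fun Z f hf => hR (hle _ ⟨_, 𝟙 _, f, hf, Category.id_comp f⟩))

lemma addTopology_mem (hE : IsChunky E) :
    addTopology hE ∈
      {J : GrothendieckTopology E |
        (⊥ : Sieve (⊥_ E)) ∈ J (⊥_ E) ∧ ∀ Q ∈ addCd E, Q.sieve ∈ J Q.X} := by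
  constructor
  · exact Or.inl ⟨Iso.refl _⟩
  · intro Q hQ
    refine Or.inr ⟨_, IsSimpleCovering.of_square Q hQ _ _
      (IsSimpleCovering.of_iso (𝟙 Q.Y) inferInstance)
      (IsSimpleCovering.of_iso (𝟙 Q.A) inferInstance), ?_⟩
    rintro W w ⟨V, l, g, (⟨h, hh, rfl⟩ | ⟨h, hh, rfl⟩), rfl⟩
    · cases hh
      exact Or.inl ⟨l, by simp⟩
    · cases hh
      exact Or.inr ⟨l, by simp⟩

lemma add_complete (hE : IsChunky E) : IsCompleteCd (addCd E) := by
  intro X S hX hS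
  have hle : cdTopology (addCd E) ≤ addTopology hE := sInf_le (addTopology_mem hE)
  have hmem : S ∈ addTopology hE X := GrothendieckTopology.le_def.mp hle X hS
  rcases hmem with h | h
  · exact absurd h hX
  · exact h

/-! ### Regularity -/

lemma aux_isPullback (hE : IsChunky E) {Q : CDSquare E} (hQ : Q ∈ addCd E) :
    IsPullback Q.top Q.left Q.p Q.e := by
  obtain ⟨A, B, φ, iB, iY, iA, iX⟩ := hQ
  haveI := iB; haveI := iY; haveI := iA; haveI := iX
  refine (hE.2.1 A B).of_iso ((asIso φ.hB).symm) ((asIso φ.hY).symm)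
    ((asIso φ.hA).symm) ((asIso φ.hX).symm) ?_ ?_ ?_ ?_
  · rw [← cancel_mono φ.hY]
    simp [φ.commTop]
    exact Subsingleton.elim _ _
  · rw [← cancel_mono φ.hA]
    simp [φ.commLeft]
    exact Subsingleton.elim _ _
  · rw [← cancel_mono φ.hX]
    exact ((Category.assoc _ _ _).trans ((congrArg ((coprod.inl : A ⟶ A ⨿ B) ≫ ·)
      (IsIso.inv_hom_id φ.hX)).trans (Category.comp_id _))).trans ((Category.assoc _ _ _).trans
      ((congrArg (inv φ.hY ≫ ·) φ.commP).trans (IsIso.inv_hom_id_assoc _ _))).symm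
  · rw [← cancel_mono φ.hX]
    exact ((Category.assoc _ _ _).trans ((congrArg ((coprod.inr : B ⟶ A ⨿ B) ≫ ·)
      (IsIso.inv_hom_id φ.hX)).trans (Category.comp_id _))).trans ((Category.assoc _ _ _).trans
      ((congrArg (inv φ.hA ≫ ·) φ.commE).trans (IsIso.inv_hom_id_assoc _ _))).symm

lemma aux_epi (hE : IsChunky E) {Q : CDSquare E} (hQ : Q ∈ addCd E) :
    Epi (cdRegComparison (addCd E) Q) := by
  haveI hp : Mono Q.p := aux_mono_p hE hQ
  haveI : Mono (yoneda.map Q.p) := inferInstance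
  haveI : Mono ((cdRho (addCd E)).map Q.p) := by
    change Mono ((presheafToSheaf _ _).map (yoneda.map Q.p))
    exact Functor.map_mono _ _
  have hdiag : coprod.inl ≫ cdRegComparison (addCd E) Q
      = pullback.lift (𝟙 _) (𝟙 _) rfl := coprod.inl_desc _ _
  haveI : IsIso (pullback.lift (𝟙 ((cdRho (addCd E)).obj Q.Y)) (𝟙 _) rfl :
      _ ⟶ pullback ((cdRho (addCd E)).map Q.p) ((cdRho (addCd E)).map Q.p)) := by
    change IsIso (pullback.diagonal ((cdRho (addCd E)).map Q.p))
    infer_instance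
  haveI : Epi (coprod.inl ≫ cdRegComparison (addCd E) Q) := by
    rw [hdiag]; infer_instance
  exact epi_of_epi coprod.inl (cdRegComparison (addCd E) Q)

lemma add_regular (hE : IsChunky E) : IsRegularCd (addCd E) :=
  fun Q hQ => ⟨aux_isPullback hE hQ, aux_mono_e hE hQ, aux_epi hE hQ⟩

/-! ### Boundedness -/
noncomputable def trivDensity : DensityStructure E where
  D n X := match n with
    | 0 => Set.univ
    | _ + 1 => {p | IsIso p.2}
  init_mem X := by trivial
  iso_mem n X U f hf := by cases n <;> [trivial; exact hf]
  antitone n X := by cases n <;> [exact fun p _ => trivial; exact fun p hp => hp]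
  comp_mem n X U V j j' hj hj' := by
    cases n with
    | zero => trivial
    | succ n =>
      haveI : IsIso j := hj
      haveI : IsIso j' := hj'
      exact inferInstanceAs (IsIso (j ≫ j'))

lemma add_bounded (hE : IsChunky E) : IsBoundedCd (addCd E) := by
  refine ⟨trivDensity, ?_, fun X => ⟨0, fun U f hf => hf⟩⟩
  intro Q hQ
  refine ⟨Q, hQ, ⟨⟨𝟙 _, 𝟙 _, 𝟙 _, 𝟙 _, by simp, by simp, by simp, by simp⟩, rfl, by simp⟩, ?_⟩
  intro i B₀ A₀ Y₀ hB hA hY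
  haveI hA' : IsIso A₀.2 := hA
  haveI hY' : IsIso Y₀.2 := hY
  refine ⟨⟨Q.X, 𝟙 Q.X⟩, inferInstanceAs (IsIso (𝟙 Q.X)),
    ⟨⊥_ E, Q.Y, Q.A, Q.X, initial.to _, initial.to _, Q.p, Q.e, Subsingleton.elim _ _⟩,
    botBSquare_mem hQ,
    ⟨initial.to Q.B, 𝟙 _, 𝟙 _, 𝟙 _, Subsingleton.elim _ _, Subsingleton.elim _ _,
      by simp, by simp⟩,
    Iso.refl _, by simp, ⟨initial.to B₀.1, Subsingleton.elim _ _⟩,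
    ⟨inv A₀.2, by simp⟩, ⟨inv Y₀.2, by simp⟩⟩

theorem statement17 (hE : IsChunky E) :
    IsCompleteCd (addCd E) ∧ IsRegularCd (addCd E) ∧ IsBoundedCd (addCd E) :=
  ⟨add_complete hE, add_regular hE, add_bounded hE⟩
end Aux
end

section
/- Let C be a chunky category. Then a presheaf of sets on C is a radditive functor (i.e., F(∅) is a point and F(X ⊔ Y) → F(X) × F(Y) is a bijection for all X, Y) if and only if it is a sheaf in the topology t_add associated to the additive cd-structure P_add. -/
open CategoryTheory CategoryTheory.Limits Opposite

universe v u
variable {C : Type u} [Category.{v} C]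

variable [HasInitial C]

variable {E : Type u} [SmallCategory E] [HasInitial E] [HasFiniteCoproducts E]

/-- A presheaf of sets is radditive if `F(∅)` is a point and
`F(X ⊔ Y) → F(X) × F(Y)` is a bijection for all `X`, `Y`. -/
def IsRadditive (F : Eᵒᵖ ⥤ Type u) : Prop :=
  (Nonempty (F.obj (op (⊥_ E))) ∧ Subsingleton (F.obj (op (⊥_ E)))) ∧
  ∀ X Y : E, Function.Bijective (fun a : F.obj (op (X ⨿ Y)) =>
    (F.map (coprod.inl : X ⟶ X ⨿ Y).op a, F.map (coprod.inr : Y ⟶ X ⨿ Y).op a))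


section Helpers

set_option linter.unusedSectionVars false

/-- Any object with a morphism to the initial object is initial. -/
noncomputable def isInitial_of_to_initial (hE : IsChunky E) {Z : E} (f : Z ⟶ ⊥_ E) : IsInitial Z := by
  haveI := hE.1 Z f
  exact IsInitial.ofIso initialIsInitial (asIso f).symm

/-- An object mapping to both summands compatibly is initial. -/
noncomputable def isInitial_of_disjoint (hE : IsChunky E) {X Y Z : E} (h : Z ⟶ X) (h' : Z ⟶ Y)
    (w : h ≫ (coprod.inl : X ⟶ X ⨿ Y) = h' ≫ coprod.inr) : IsInitial Z :=
  isInitial_of_to_initial hE ((hE.2.1 X Y).lift h h' w)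

lemma mono_inl (hE : IsChunky E) (X Y : E) : Mono (coprod.inl : X ⟶ X ⨿ Y) := by
  constructor
  intro Z h h' hhh
  obtain ⟨Zx, Zy, px, qx, py, qy, hpx, hpy, ⟨c⟩⟩ := hE.2.2 X Y Z (h ≫ coprod.inl)
  have hZy : IsInitial Zy := by
    refine isInitial_of_disjoint hE (py ≫ h) qy ?_
    rw [Category.assoc]; exact hpy.w
  -- `px` is an isomorphism
  set t : Z ⟶ Zx := c.desc (BinaryCofan.mk (𝟙 Zx) (hZy.to Zx)) with ht
  have h1 : px ≫ t = 𝟙 Zx := c.fac _ ⟨WalkingPair.left⟩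
  have h2 : py ≫ t = hZy.to Zx := c.fac _ ⟨WalkingPair.right⟩
  have h3 : t ≫ px = 𝟙 Z := by
    refine BinaryCofan.IsColimit.hom_ext c ?_ ?_
    · show px ≫ t ≫ px = px ≫ 𝟙 Z
      rw [← Category.assoc, h1, Category.id_comp, Category.comp_id]
    · exact hZy.hom_ext _ _
  haveI : IsIso px := ⟨t, h1, h3⟩
  have hu : hpx.lift (𝟙 Z) h (by rw [Category.id_comp]) ≫ px = 𝟙 Z := hpx.lift_fst _ _ _
  have hu' : hpx.lift (𝟙 Z) h' (by rw [Category.id_comp, hhh]) ≫ px = 𝟙 Z := hpx.lift_fst _ _ _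
  have : hpx.lift (𝟙 Z) h (by rw [Category.id_comp])
      = hpx.lift (𝟙 Z) h' (by rw [Category.id_comp, hhh]) := by
    rw [← cancel_mono px, hu, hu']
  calc h = hpx.lift (𝟙 Z) h (by rw [Category.id_comp]) ≫ qx := (hpx.lift_snd _ _ _).symm
    _ = hpx.lift (𝟙 Z) h' (by rw [Category.id_comp, hhh]) ≫ qx := by rw [this]
    _ = h' := hpx.lift_snd _ _ _

lemma mono_inr (hE : IsChunky E) (X Y : E) : Mono (coprod.inr : Y ⟶ X ⨿ Y) := by
  constructor
  intro Z h h' hhh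
  obtain ⟨Zx, Zy, px, qx, py, qy, hpx, hpy, ⟨c⟩⟩ := hE.2.2 X Y Z (h ≫ coprod.inr)
  have hZx : IsInitial Zx := by
    refine isInitial_of_disjoint hE qx (px ≫ h) ?_
    rw [Category.assoc]; exact hpx.w.symm
  set t : Z ⟶ Zy := c.desc (BinaryCofan.mk (hZx.to Zy) (𝟙 Zy)) with ht
  have h1 : py ≫ t = 𝟙 Zy := c.fac _ ⟨WalkingPair.right⟩
  have h3 : t ≫ py = 𝟙 Z := by
    refine BinaryCofan.IsColimit.hom_ext c ?_ ?_
    · exact hZx.hom_ext _ _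
    · show py ≫ t ≫ py = py ≫ 𝟙 Z
      rw [← Category.assoc, h1, Category.id_comp, Category.comp_id]
  haveI : IsIso py := ⟨t, h1, h3⟩
  have hu : hpy.lift (𝟙 Z) h (by rw [Category.id_comp]) ≫ py = 𝟙 Z := hpy.lift_fst _ _ _
  have hu' : hpy.lift (𝟙 Z) h' (by rw [Category.id_comp, hhh]) ≫ py = 𝟙 Z := hpy.lift_fst _ _ _
  have : hpy.lift (𝟙 Z) h (by rw [Category.id_comp])
      = hpy.lift (𝟙 Z) h' (by rw [Category.id_comp, hhh]) := by
    rw [← cancel_mono py, hu, hu']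
  calc h = hpy.lift (𝟙 Z) h (by rw [Category.id_comp]) ≫ qy := (hpy.lift_snd _ _ _).symm
    _ = hpy.lift (𝟙 Z) h' (by rw [Category.id_comp, hhh]) ≫ qy := by rw [this]
    _ = h' := hpy.lift_snd _ _ _

variable (F : Eᵒᵖ ⥤ Type u)

/-- Transfer the "point" property along an initial object. -/
lemma point_of_isInitial
    (h : Nonempty (F.obj (op (⊥_ E))) ∧ Subsingleton (F.obj (op (⊥_ E))))
    {Z : E} (hZ : IsInitial Z) :
    Nonempty (F.obj (op Z)) ∧ Subsingleton (F.obj (op Z)) := by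
  have e : F.obj (op (⊥_ E)) ≃ F.obj (op Z) :=
    (F.mapIso (hZ.uniqueUpToIso initialIsInitial).op).toEquiv
  obtain ⟨⟨a⟩, hsub⟩ := h
  exact ⟨⟨e a⟩, e.symm.subsingleton⟩

/-- A sieve with no arrows is a sheaf condition iff the sections form a point. -/
lemma isSheafFor_of_empty {Z : E} (S : Sieve Z) (hS : ∀ ⦃W⦄ (g : W ⟶ Z), ¬ S g)
    (h : Nonempty (F.obj (op Z)) ∧ Subsingleton (F.obj (op Z))) :
    Presieve.IsSheafFor F (S : Presieve Z) := by
  intro x _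
  obtain ⟨⟨a⟩, hsub⟩ := h
  exact ⟨a, fun W g hg => absurd hg (hS g), fun b _ => Subsingleton.elim b a⟩

/-- Radditivity for an arbitrary binary coproduct cocone. -/
lemma radditive_cofan (hF : IsRadditive F) {Zx Zy Z : E} (px : Zx ⟶ Z) (py : Zy ⟶ Z)
    (c : IsColimit (BinaryCofan.mk px py)) :
    Function.Bijective (fun a : F.obj (op Z) => (F.map px.op a, F.map py.op a)) := by
  set d : Zx ⨿ Zy ⟶ Z := coprod.desc px py with hd
  set d' : Z ⟶ Zx ⨿ Zy := c.desc (BinaryCofan.mk coprod.inl coprod.inr) with hd'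
  have h1 : px ≫ d' = coprod.inl := c.fac _ ⟨WalkingPair.left⟩
  have h2 : py ≫ d' = coprod.inr := c.fac _ ⟨WalkingPair.right⟩
  haveI : IsIso d := by
    refine ⟨d', ?_, ?_⟩
    · apply coprod.hom_ext <;> simp only [hd, coprod.inl_desc_assoc, coprod.inr_desc_assoc, h1, h2, Category.comp_id]
    · refine BinaryCofan.IsColimit.hom_ext c ?_ ?_
      · exact (Category.assoc _ _ _).symm.trans ((congrArg (· ≫ d) h1).trans ((coprod.inl_desc px py).trans (Category.comp_id px).symm))
      · exact (Category.assoc _ _ _).symm.trans ((congrArg (· ≫ d) h2).trans ((coprod.inr_desc px py).trans (Category.comp_id py).symm))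
  have hbij : Function.Bijective (F.map d.op) :=
    (asIso (F.map d.op)).toEquiv.bijective
  have key : (fun a : F.obj (op Z) => (F.map px.op a, F.map py.op a))
      = (fun a : F.obj (op (Zx ⨿ Zy)) =>
          (F.map (coprod.inl : Zx ⟶ Zx ⨿ Zy).op a,
           F.map (coprod.inr : Zy ⟶ Zx ⨿ Zy).op a)) ∘ F.map d.op := by
    funext a
    have e1 : px = coprod.inl ≫ d := by rw [hd, coprod.inl_desc]
    have e2 : py = coprod.inr ≫ d := by rw [hd, coprod.inr_desc]
    simp only [Function.comp_apply, e1, e2, op_comp, FunctorToTypes.map_comp_apply]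
  rw [key]
  exact (hF.2 Zx Zy).comp hbij

/-- The key sheaf condition: `F` is a sheaf for every pullback of a coproduct sieve. -/
lemma isSheafFor_pullback_coprod (hE : IsChunky E) (hF : IsRadditive F) (X Y : E) {Z : E} (f : Z ⟶ X ⨿ Y) :
    Presieve.IsSheafFor F ((Sieve.pullback f (coprodSquare X Y).sieve) : Presieve Z) := by
  obtain ⟨Zx, Zy, px, qx, py, qy, hpx, hpy, ⟨c⟩⟩ := hE.2.2 X Y Z f
  have hbij := radditive_cofan F hF px py c
  have hmem_px : Sieve.pullback f (coprodSquare X Y).sieve px := Or.inl ⟨qx, hpx.w⟩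
  have hmem_py : Sieve.pullback f (coprodSquare X Y).sieve py := Or.inr ⟨qy, hpy.w⟩
  intro x hx
  rw [Presieve.compatible_iff_sieveCompatible] at hx
  obtain ⟨a, ha⟩ := hbij.2 (x px hmem_px, x py hmem_py)
  have ha1 : F.map px.op a = x px hmem_px := congrArg Prod.fst ha
  have ha2 : F.map py.op a = x py hmem_py := congrArg Prod.snd ha
  refine ⟨a, ?_, ?_⟩
  · rintro W g (⟨h, hh⟩ | ⟨h, hh⟩)
    · obtain ⟨u, hu1, hu2⟩ : ∃ u : W ⟶ Zx, u ≫ px = g ∧ u ≫ qx = h :=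
        ⟨hpx.lift g h hh, hpx.lift_fst _ _ _, hpx.lift_snd _ _ _⟩
      obtain rfl : g = u ≫ px := hu1.symm
      calc F.map (u ≫ px).op a = F.map u.op (F.map px.op a) := by
            rw [op_comp, FunctorToTypes.map_comp_apply]
        _ = F.map u.op (x px hmem_px) := by rw [ha1]
        _ = x (u ≫ px) _ := (hx px u hmem_px).symm
    · obtain ⟨u, hu1, hu2⟩ : ∃ u : W ⟶ Zy, u ≫ py = g ∧ u ≫ qy = h :=
        ⟨hpy.lift g h hh, hpy.lift_fst _ _ _, hpy.lift_snd _ _ _⟩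
      obtain rfl : g = u ≫ py := hu1.symm
      calc F.map (u ≫ py).op a = F.map u.op (F.map py.op a) := by
            rw [op_comp, FunctorToTypes.map_comp_apply]
        _ = F.map u.op (x py hmem_py) := by rw [ha2]
        _ = x (u ≫ py) _ := (hx py u hmem_py).symm
  · intro b hb
    apply hbij.1
    rw [ha]
    exact Prod.ext (hb px hmem_px) (hb py hmem_py)

end Helpers

section Main

variable (F : Eᵒᵖ ⥤ Type u)

lemma coprodSquare_p (X Y : E) : (coprodSquare X Y).p = coprod.inl := rfl
lemma coprodSquare_e (X Y : E) : (coprodSquare X Y).e = coprod.inr := rfl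

lemma mem_cdTopology (P : Set (CDSquare E)) {X : E} (S : Sieve X) :
    S ∈ cdTopology P X ↔
      ∀ J ∈ {J : GrothendieckTopology E |
        (⊥ : Sieve (⊥_ E)) ∈ J (⊥_ E) ∧ ∀ Q ∈ P, Q.sieve ∈ J Q.X}, S ∈ J X :=
  GrothendieckTopology.mem_sInf _ _

open Classical in
/-- The family of elements used for surjectivity. -/
noncomputable def mixFamily (X Y : E) (ax : F.obj (op X)) (ay : F.obj (op Y)) :
    Presieve.FamilyOfElements F ((coprodSquare X Y).sieve.arrows) :=
  fun W g hg =>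
    if hc : ∃ h : W ⟶ X, g = h ≫ coprod.inl then F.map hc.choose.op ax
    else F.map (hg.resolve_left hc).choose.op ay

lemma mixFamily_inl (hE : IsChunky E) (X Y : E) (ax : F.obj (op X)) (ay : F.obj (op Y))
    {W : E} (g : W ⟶ X ⨿ Y) (hg : (coprodSquare X Y).sieve g)
    (h : W ⟶ X) (hh : g = h ≫ coprod.inl) :
    mixFamily F X Y ax ay g hg = F.map h.op ax := by
  have hc : ∃ h' : W ⟶ X, g = h' ≫ coprod.inl := ⟨h, hh⟩
  haveI := mono_inl hE X Y
  obtain rfl : hc.choose = h := by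
    have h3 : h ≫ (coprod.inl : X ⟶ X ⨿ Y) = hc.choose ≫ coprod.inl :=
      hh.symm.trans hc.choose_spec
    exact ((cancel_mono (coprod.inl : X ⟶ X ⨿ Y)).1 h3).symm
  simp only [mixFamily]
  exact dif_pos hc

lemma mixFamily_inr (hE : IsChunky E) (X Y : E) (ax : F.obj (op X)) (ay : F.obj (op Y))
    (hpt : Nonempty (F.obj (op (⊥_ E))) ∧ Subsingleton (F.obj (op (⊥_ E))))
    {W : E} (g : W ⟶ X ⨿ Y) (hg : (coprodSquare X Y).sieve g)
    (h : W ⟶ Y) (hh : g = h ≫ coprod.inr) :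
    mixFamily F X Y ax ay g hg = F.map h.op ay := by
  by_cases hc : ∃ h' : W ⟶ X, g = h' ≫ coprod.inl
  · obtain ⟨h', hh'⟩ := hc
    have hinit : IsInitial W := isInitial_of_disjoint hE h' h (by rw [← hh', hh])
    haveI := (point_of_isInitial F hpt hinit).2
    exact Subsingleton.elim _ _
  · haveI := mono_inr hE X Y
    have hr : ∃ h' : W ⟶ Y, g = h' ≫ coprod.inr := hg.resolve_left hc
    obtain rfl : (hg.resolve_left hc).choose = h := by
      have h3 : h ≫ (coprod.inr : Y ⟶ X ⨿ Y) = (hg.resolve_left hc).choose ≫ coprod.inr :=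
        hh.symm.trans ((hg.resolve_left hc).choose_spec.trans (by exact rfl))
      exact ((cancel_mono (coprod.inr : Y ⟶ X ⨿ Y)).1 h3).symm
    simp only [mixFamily]
    exact dif_neg hc

end Main

theorem statement18 (hE : IsChunky E) (F : Eᵒᵖ ⥤ Type u) :
    IsRadditive F ↔ Presheaf.IsSheaf (cdTopology (addCd E)) F := by
  rw [isSheaf_iff_isSheaf_of_type]
  constructor
  · -- radditive → sheaf
    intro hF
    have hmem : CategoryTheory.Sheaf.finestTopologySingle F ∈
        {J : GrothendieckTopology E |
          (⊥ : Sieve (⊥_ E)) ∈ J (⊥_ E) ∧ ∀ Q ∈ addCd E, Q.sieve ∈ J Q.X} := by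
      constructor
      · intro Z f
        refine isSheafFor_of_empty F _ (fun W g hg => hg) ?_
        exact point_of_isInitial F ⟨hF.1.1, hF.1.2⟩ (isInitial_of_to_initial hE f)
      · rintro Q ⟨X, Y, φ, hB, hY, hA, hX⟩
        intro Z f
        have hsieve : Sieve.pullback f Q.sieve
            = Sieve.pullback (f ≫ φ.hX) (coprodSquare X Y).sieve := by
          ext W g
          constructor
          · rintro (⟨h, hh⟩ | ⟨h, hh⟩)
            · refine Or.inl ⟨h ≫ φ.hY, ?_⟩
              rw [← Category.assoc g, hh, Category.assoc, Category.assoc, φ.commP]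
            · refine Or.inr ⟨h ≫ φ.hA, ?_⟩
              rw [← Category.assoc g, hh, Category.assoc, Category.assoc, φ.commE]
          · rintro (⟨h, hh⟩ | ⟨h, hh⟩)
            · refine Or.inl ⟨h ≫ inv φ.hY, ?_⟩
              rw [← cancel_mono φ.hX]
              simp only [Category.assoc]
              rw [φ.commP, IsIso.inv_hom_id_assoc]
              exact hh
            · refine Or.inr ⟨h ≫ inv φ.hA, ?_⟩
              rw [← cancel_mono φ.hX]
              simp only [Category.assoc]
              rw [φ.commE, IsIso.inv_hom_id_assoc]
              exact hh
        show Presieve.IsSheafFor F (Sieve.pullback f Q.sieve : Presieve Z)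
        rw [hsieve]
        exact isSheafFor_pullback_coprod F hE hF X Y (f ≫ φ.hX)
    intro Xc S hS
    have hS' : S ∈ CategoryTheory.Sheaf.finestTopologySingle F Xc :=
      (mem_cdTopology _ S).1 hS _ hmem
    have := hS' Xc (𝟙 Xc)
    rwa [Sieve.pullback_id] at this
  · -- sheaf → radditive
    intro hsheaf
    have hbotmem : (⊥ : Sieve (⊥_ E)) ∈ cdTopology (addCd E) (⊥_ E) :=
      (mem_cdTopology _ _).2 fun J hJ => hJ.1
    have hbot := hsheaf _ hbotmem
    have hpt : Nonempty (F.obj (op (⊥_ E))) ∧ Subsingleton (F.obj (op (⊥_ E))) := by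
      obtain ⟨t, -, huniq⟩ := hbot (fun W g hg => False.elim hg)
        (by intro Y₁ Y₂ Z g₁ g₂ f₁ f₂ h₁ h₂ hcomm; exact False.elim h₁)
      refine ⟨⟨t⟩, ⟨fun a b => ?_⟩⟩
      rw [huniq a (fun W g hg => False.elim hg), huniq b (fun W g hg => False.elim hg)]
    refine ⟨hpt, fun X Y => ?_⟩
    have hmemXY : (coprodSquare X Y).sieve ∈ cdTopology (addCd E) ((coprodSquare X Y).X) :=
      (mem_cdTopology _ _).2 fun J hJ => hJ.2 _ ⟨X, Y,
        ⟨⟨𝟙 _, 𝟙 _, 𝟙 _, 𝟙 _, by simp, by simp, by simp, by simp⟩,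
          inferInstance, inferInstance, inferInstance, inferInstance⟩⟩
    have hS : Presieve.IsSheafFor F ((coprodSquare X Y).sieve.arrows) :=
      hsheaf _ hmemXY
    have hinl : (coprodSquare X Y).sieve (coprod.inl : X ⟶ X ⨿ Y) :=
      Or.inl ⟨𝟙 X, (Category.id_comp (coprod.inl : X ⟶ X ⨿ Y)).symm⟩
    have hinr : (coprodSquare X Y).sieve (coprod.inr : Y ⟶ X ⨿ Y) :=
      Or.inr ⟨𝟙 Y, (Category.id_comp (coprod.inr : Y ⟶ X ⨿ Y)).symm⟩
    constructor
    · intro a b hab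
      have h1 : F.map coprod.inl.op a = F.map coprod.inl.op b := congrArg Prod.fst hab
      have h2 : F.map coprod.inr.op a = F.map coprod.inr.op b := congrArg Prod.snd hab
      refine hS.isSeparatedFor.ext ?_
      rintro W g (⟨h, rfl⟩ | ⟨h, rfl⟩)
      · show F.map ((h ≫ (coprod.inl : X ⟶ X ⨿ Y)).op) a
          = F.map ((h ≫ (coprod.inl : X ⟶ X ⨿ Y)).op) b
        exact (FunctorToTypes.map_comp_apply F (coprod.inl : X ⟶ X ⨿ Y).op (h : W ⟶ X).op a).trans
          ((congrArg (F.map (h : W ⟶ X).op) h1).trans (FunctorToTypes.map_comp_apply F _ _ b).symm)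
      · show F.map ((h ≫ (coprod.inr : Y ⟶ X ⨿ Y)).op) a
          = F.map ((h ≫ (coprod.inr : Y ⟶ X ⨿ Y)).op) b
        exact (FunctorToTypes.map_comp_apply F (coprod.inr : Y ⟶ X ⨿ Y).op (h : W ⟶ Y).op a).trans
          ((congrArg (F.map (h : W ⟶ Y).op) h2).trans (FunctorToTypes.map_comp_apply F _ _ b).symm)
    · rintro ⟨ax, ay⟩
      have hcompat : (mixFamily F X Y ax ay).Compatible := by
        rw [Presieve.compatible_iff_sieveCompatible]
        rintro W W' g f hf
        rcases hf with hf' | hf'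
        · obtain ⟨h, hh⟩ := hf'
          rw [coprodSquare_p] at hh
          refine (mixFamily_inl F hE X Y ax ay (f ≫ g) _ (f ≫ h)
              (by rw [hh]; exact (Category.assoc _ _ _).symm)).trans ?_
          refine Eq.trans ?_ (congrArg (F.map f.op) (mixFamily_inl F hE X Y ax ay g _ h hh)).symm
          exact FunctorToTypes.map_comp_apply F h.op f.op ax
        · obtain ⟨h, hh⟩ := hf'
          rw [coprodSquare_e] at hh
          refine (mixFamily_inr F hE X Y ax ay hpt (f ≫ g) _ (f ≫ h)
              (by rw [hh]; exact (Category.assoc _ _ _).symm)).trans ?_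
          refine Eq.trans ?_ (congrArg (F.map f.op) (mixFamily_inr F hE X Y ax ay hpt g _ h hh)).symm
          exact FunctorToTypes.map_comp_apply F h.op f.op ay
      obtain ⟨a, ha, -⟩ := hS (mixFamily F X Y ax ay) hcompat
      refine ⟨a, ?_⟩
      have h1 := ha coprod.inl hinl
      rw [mixFamily_inl F hE X Y ax ay coprod.inl hinl (𝟙 X) (Category.id_comp _).symm,
        op_id, FunctorToTypes.map_id_apply] at h1
      have h2 := ha coprod.inr hinr
      rw [mixFamily_inr F hE X Y ax ay hpt coprod.inr hinr (𝟙 Y) (Category.id_comp _).symm,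
        op_id, FunctorToTypes.map_id_apply] at h2
      exact Prod.ext h1 h2
end
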